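/- arXiv:1504.05176 — 2 statements merged into one kernel-verified Lean document; each statement's English description precedes it below -/
import Mathlib

section
/- Vertex operators and fermionic generating functions quasi-commute: Γ_{L+}(x) ψ(z) = (1-xz)^{-1} ψ(z) Γ_{L+}(x) and Γ_{R+}(x) ψ(z) = (1+xz) ψ(z) Γ_{R+}(x), as identities of coefficient extraction: for every k ∈ ℤ+1/2, Γ_{R+}(x) ψ_k = ψ_k Γ_{R+}(x) + x ψ_{k-1} Γ_{R+}(x), and Γ_{L+}(x) ψ_k = Σ_{j≥0} x^j ψ_{k-j} Γ_{L+}(x). -/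
open scoped Classical

/-- `InterF f g` means `f ≻ g`, i.e. `f 0 ≥ g 0 ≥ f 1 ≥ g 1 ≥ ⋯` (0-indexed). -/
def InterF (f g : ℕ → ℕ) : Prop := ∀ i : ℕ, g i ≤ f i ∧ f (i + 1) ≤ g i

/-- `conjF f i` is the `(i+1)`-st part of the conjugate partition. -/
noncomputable def conjF (f : ℕ → ℕ) (i : ℕ) : ℕ := Set.ncard {j : ℕ | i + 1 ≤ f j}

/-- The size `|f| = Σ f i`. -/
noncomputable def sizeF (f : ℕ → ℕ) : ℕ := ∑ᶠ i : ℕ, f i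

/-- A Maya diagram: a two-coloring of `ℤ + 1/2` (the integer `n` encodes the position `n + 1/2`;
`true` = black marble, `false` = white marble), eventually black to the left and
eventually white to the right. -/
structure Maya where
  f : ℤ → Bool
  black_small : ∃ N : ℤ, ∀ n : ℤ, n < N → f n = true
  white_large : ∃ N : ℤ, ∀ n : ℤ, N < n → f n = false

/-- The charge of a Maya diagram:
`#{k > 0 : m k = black} - #{k < 0 : m k = white}` (positions `k = n + 1/2`). -/
noncomputable def Maya.charge (m : Maya) : ℤ :=
  (Set.ncard {n : ℤ | 0 ≤ n ∧ m.f n = true} : ℤ) -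
    (Set.ncard {n : ℤ | n < 0 ∧ m.f n = false} : ℤ)

/-- `Corresponds m lam c`: the Maya diagram `m` corresponds to the charged partition `(lam, c)`:
`c` is the charge of `m` and, enumerating the black positions `k 0 > k 1 > ⋯` of `m`
in decreasing order, `λ_{i+1} = k_{i+1} - c + (i+1) - 1/2`, which in our integer encoding of
positions (`n` encodes `n + 1/2`) reads `lam i = k i - c + i + 1`. -/
def Corresponds (m : Maya) (lam : ℕ → ℕ) (c : ℤ) : Prop :=
  c = m.charge ∧
    ∃ k : ℕ → ℤ, StrictAnti k ∧ (∀ n : ℤ, m.f n = true ↔ ∃ i : ℕ, k i = n) ∧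
      ∀ i : ℕ, (lam i : ℤ) = k i - c + i + 1

/-- The fermionic Fock space: formal linear combinations of Maya diagrams. -/
abbrev Fock := Maya →₀ ℂ

/-- Flip the marble of `m` at site `k`. -/
def Maya.flip (m : Maya) (k : ℤ) : Maya where
  f := Function.update m.f k (!(m.f k))
  black_small := by
    obtain ⟨N, hN⟩ := m.black_small
    refine ⟨min N k, fun n hn => ?_⟩
    rw [Function.update_of_ne (by omega)]
    exact hN n (by omega)
  white_large := by
    obtain ⟨N, hN⟩ := m.white_large
    refine ⟨max N k, fun n hn => ?_⟩
    rw [Function.update_of_ne (by omega)]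
    exact hN n (by omega)

/-- The number of black marbles of `m` strictly above site `k`. -/
noncomputable def nAbove (m : Maya) (k : ℤ) : ℕ := Set.ncard {j : ℤ | k < j ∧ m.f j = true}

open scoped Classical in
/-- The fermionic operator `ψ_k` (here `k : ℤ` encodes the position `k + 1/2`). -/
noncomputable def psi (k : ℤ) : Fock →ₗ[ℂ] Fock :=
  Finsupp.lsum ℂ fun m => LinearMap.toSpanSingleton ℂ Fock
    (if m.f k = false then ((-1 : ℂ) ^ nAbove m k) • Finsupp.single (m.flip k) (1 : ℂ) else 0)

open scoped Classical in
/-- The fermionic operator `ψ*_k`. -/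
noncomputable def psiStar (k : ℤ) : Fock →ₗ[ℂ] Fock :=
  Finsupp.lsum ℂ fun m => LinearMap.toSpanSingleton ℂ Fock
    (if m.f k = true then ((-1 : ℂ) ^ nAbove m k) • Finsupp.single (m.flip k) (1 : ℂ) else 0)

/-- `MayaPrec a mlow mhigh p`: the matrix element `⟨mlow|Γ_{a+}(x)|mhigh⟩` carries `x^p`, i.e.
`mlow` and `mhigh` have the same charge `c`, and their partitions `μ, λ` satisfy `μ ≺_a λ`
(`a = true` = `L`: `λ/μ` horizontal strip; `a = false` = `R`: `λ'/μ'` horizontal strip) with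
`|λ| = |μ| + p`. -/
def MayaPrec (a : Bool) (mlow mhigh : Maya) (p : ℕ) : Prop :=
  ∃ (c : ℤ) (lam mu : ℕ → ℕ), Corresponds mhigh lam c ∧ Corresponds mlow mu c ∧
    (if a then InterF lam mu else InterF (conjF lam) (conjF mu)) ∧
    sizeF lam = sizeF mu + p

namespace S12

/-- downward closed finite subsets of ℕ are initial segments -/
lemma mem_iff_lt_ncard {S : Set ℕ} (hS : S.Finite) (hdc : ∀ x ∈ S, ∀ y, y ≤ x → y ∈ S) (j : ℕ) :
    j ∈ S ↔ j < S.ncard := by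
  constructor
  · intro hj
    have h1 : Set.Iic j ⊆ S := fun y hy => hdc j hj y hy
    have h3 := Set.ncard_le_ncard h1 hS
    have h2 : (Set.Iic j).ncard = j + 1 := by
      rw [← Finset.coe_Iic, Set.ncard_coe_finset, Nat.card_Iic]
    omega
  · intro hj
    by_contra hns
    have h1 : S ⊆ Set.Iio j := by
      intro x hx
      by_contra hxx
      simp only [Set.mem_Iio, not_lt] at hxx
      exact hns (hdc x hx j hxx)
    have h3 := Set.ncard_le_ncard h1 (Set.finite_Iio j)
    have h2 : (Set.Iio j).ncard = j := by
      rw [← Finset.coe_Iio, Set.ncard_coe_finset, Nat.card_Iio]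
    omega

lemma conj_lt_iff {f : ℕ → ℕ} (hf : Antitone f) {N : ℕ} (hN : ∀ i, N ≤ i → f i = 0)
    (s j : ℕ) : j < conjF f s ↔ s + 1 ≤ f j := by
  have hfin : {j : ℕ | s + 1 ≤ f j}.Finite := by
    apply Set.Finite.subset (Set.finite_Iio N)
    intro x hx
    simp only [Set.mem_setOf_eq] at hx
    simp only [Set.mem_Iio]
    by_contra h
    have := hN x (by omega)
    omega
  have hdc : ∀ x ∈ {j : ℕ | s + 1 ≤ f j}, ∀ y, y ≤ x → y ∈ {j : ℕ | s + 1 ≤ f j} := by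
    intro x hx y hy
    simp only [Set.mem_setOf_eq] at *
    exact le_trans hx (hf hy)
  have h := (mem_iff_lt_ncard hfin hdc j)
  simp only [Set.mem_setOf_eq] at h
  rw [conjF, ← h]

lemma interF_conj_iff {f g : ℕ → ℕ} (hf : Antitone f) (hg : Antitone g)
    {Nf Ng : ℕ} (hNf : ∀ i, Nf ≤ i → f i = 0) (hNg : ∀ i, Ng ≤ i → g i = 0) :
    InterF (conjF f) (conjF g) ↔ ∀ i, g i ≤ f i ∧ f i ≤ g i + 1 := by
  constructor
  · intro h i
    constructor
    · rcases Nat.eq_zero_or_pos (g i) with h0 | h0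
      · omega
      · have h1 : i < conjF g (g i - 1) := (conj_lt_iff hg hNg _ i).mpr (by omega)
        have h2 : conjF g (g i - 1) ≤ conjF f (g i - 1) := (h (g i - 1)).1
        have := (conj_lt_iff hf hNf (g i - 1) i).mp (by omega)
        omega
    · by_contra hc
      have h1 : i < conjF f (g i + 1) := (conj_lt_iff hf hNf _ i).mpr (by omega)
      have h2 : conjF f (g i + 1) ≤ conjF g (g i) := (h (g i)).2
      have := (conj_lt_iff hg hNg (g i) i).mp (by omega)
      omega
  · intro h i
    constructor
    · by_contra hc
      push_neg at hc
      have h1 := (conj_lt_iff hg hNg i (conjF f i)).mp hc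
      have h2 : ¬ (i + 1 ≤ f (conjF f i)) := by
        intro hh
        exact absurd ((conj_lt_iff hf hNf i _).mpr hh) (lt_irrefl _)
      have := (h (conjF f i)).1
      omega
    · by_contra hc
      push_neg at hc
      have h1 := (conj_lt_iff hf hNf (i+1) (conjF g i)).mp hc
      have h2 : ¬ (i + 1 ≤ g (conjF g i)) := by
        intro hh
        exact absurd ((conj_lt_iff hg hNg i _).mpr hh) (lt_irrefl _)
      have := (h (conjF g i)).2
      omega

/-! ### ranks for strictly antitone sequences -/

noncomputable def rk (k : ℕ → ℤ) (t : ℤ) : ℕ := sInf {a | k a ≤ t}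

lemma strictAnti_le_sub {k : ℕ → ℤ} (hk : StrictAnti k) (i : ℕ) : k i ≤ k 0 - i := by
  induction i with
  | zero => simp
  | succ m ih =>
    have h2 : k (m+1) < k m := hk (by omega)
    push_cast
    omega

lemma rk_le_iff {k : ℕ → ℤ} (hk : StrictAnti k) (t : ℤ) (a : ℕ) : rk k t ≤ a ↔ k a ≤ t := by
  have hne : {a : ℕ | k a ≤ t}.Nonempty := by
    refine ⟨(k 0 - t).toNat, ?_⟩
    have h1 := strictAnti_le_sub hk (k 0 - t).toNat
    have h2 := Int.self_le_toNat (k 0 - t)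
    simp only [Set.mem_setOf_eq]
    omega
  constructor
  · intro h
    calc k a ≤ k (rk k t) := hk.antitone h
    _ ≤ t := Nat.sInf_mem hne
  · intro h
    exact Nat.sInf_le h

lemma lt_rk_iff {k : ℕ → ℤ} (hk : StrictAnti k) (t : ℤ) (a : ℕ) : a < rk k t ↔ t < k a := by
  rw [← not_le, ← not_le, rk_le_iff hk]

lemma rk_eq {k : ℕ → ℤ} (hk : StrictAnti k) {t : ℤ} {r : ℕ} (h : k r = t) : rk k t = r := by
  have h1 : rk k t ≤ r := (rk_le_iff hk t r).mpr h.le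
  rcases lt_or_eq_of_le h1 with h2 | h2
  · exfalso
    have h3 := hk h2
    have h4 : k (rk k t) ≤ t := (rk_le_iff hk t (rk k t)).mp le_rfl
    omega
  · exact h2

lemma rk_eq_of_between {k : ℕ → ℤ} (hk : StrictAnti k) {t : ℤ} {r : ℕ}
    (h1 : k r ≤ t) (h2 : r = 0 ∨ t < k (r - 1)) : rk k t = r := by
  have ha : rk k t ≤ r := (rk_le_iff hk t r).mpr h1
  rcases h2 with h2 | h2
  · omega
  · by_contra hne
    have h3 : rk k t ≤ r - 1 := by omega
    have h4 := (rk_le_iff hk t (r-1)).mp h3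
    omega

end S12
namespace S12

lemma flip_f (m : Maya) (t x : ℤ) : (m.flip t).f x = if x = t then !(m.f t) else m.f x :=
  Function.update_apply _ _ _ _

lemma finite_blacks_above (m : Maya) (t : ℤ) : {j : ℤ | t < j ∧ m.f j = true}.Finite := by
  obtain ⟨N, hN⟩ := m.white_large
  apply Set.Finite.subset (Set.finite_Ioc t (max t N))
  rintro x ⟨hx1, hx2⟩
  refine ⟨hx1, ?_⟩
  by_contra h
  push_neg at h
  have := hN x (by omega)
  simp_all

lemma finite_whites_below (m : Maya) (t : ℤ) : {j : ℤ | j < t ∧ m.f j = false}.Finite := by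
  obtain ⟨N, hN⟩ := m.black_small
  apply Set.Finite.subset (Set.finite_Ico (min t N) t)
  rintro x ⟨hx1, hx2⟩
  refine ⟨?_, hx1⟩
  by_contra h
  push_neg at h
  have := hN x (by omega)
  simp_all

lemma finite_A (m : Maya) : {x : ℤ | 0 ≤ x ∧ m.f x = true}.Finite := by
  apply Set.Finite.subset (finite_blacks_above m (-1))
  rintro x ⟨hx1, hx2⟩
  exact ⟨by omega, hx2⟩

lemma finite_B (m : Maya) : {x : ℤ | x < 0 ∧ m.f x = false}.Finite :=
  finite_whites_below m 0

/-- enumeration of the black marbles in decreasing order -/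
def IsEnum (m : Maya) (k : ℕ → ℤ) : Prop :=
  StrictAnti k ∧ ∀ t : ℤ, m.f t = true ↔ ∃ i, k i = t

lemma exists_greatest_top (m : Maya) :
    ∃ b : ℤ, m.f b = true ∧ ∀ s, m.f s = true → s ≤ b := by
  obtain ⟨N, hN⟩ := m.white_large
  obtain ⟨N2, hN2⟩ := m.black_small
  have := Int.exists_greatest_of_bdd (P := fun z => m.f z = true)
    ⟨N, fun z hz => by by_contra h; push_neg at h; have := hN z (by omega); simp_all⟩
    ⟨N2 - 1, hN2 _ (by omega)⟩
  obtain ⟨b, hb1, hb2⟩ := this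
  exact ⟨b, hb1, hb2⟩

lemma exists_greatest_below (m : Maya) (t : ℤ) :
    ∃ b : ℤ, (m.f b = true ∧ b < t) ∧ ∀ s, m.f s = true ∧ s < t → s ≤ b := by
  obtain ⟨N2, hN2⟩ := m.black_small
  have := Int.exists_greatest_of_bdd (P := fun z => m.f z = true ∧ z < t)
    ⟨t, fun z hz => hz.2.le⟩
    ⟨min N2 t - 1, hN2 _ (by omega), by omega⟩
  obtain ⟨b, hb1, hb2⟩ := this
  exact ⟨b, hb1, hb2⟩

noncomputable def enum (m : Maya) : ℕ → ℤ
  | 0 => Classical.choose (exists_greatest_top m)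
  | i + 1 => Classical.choose (exists_greatest_below m (enum m i))

lemma isEnum_enum (m : Maya) : IsEnum m (enum m) := by
  have htop : m.f (enum m 0) = true ∧ ∀ s, m.f s = true → s ≤ enum m 0 :=
    Classical.choose_spec (exists_greatest_top m)
  have hbel : ∀ i : ℕ, (m.f (enum m (i+1)) = true ∧ enum m (i+1) < enum m i) ∧
      ∀ s, m.f s = true ∧ s < enum m i → s ≤ enum m (i+1) :=
    fun i => Classical.choose_spec (exists_greatest_below m (enum m i))
  have hlt : ∀ i : ℕ, enum m (i+1) < enum m i := fun i => (hbel i).1.2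
  have hblack : ∀ i, m.f (enum m i) = true := by
    intro i
    cases i with
    | zero => exact htop.1
    | succ j => exact (hbel j).1.1
  have hsa : StrictAnti (enum m) := strictAnti_nat_of_succ_lt hlt
  refine ⟨hsa, fun t => ⟨?_, ?_⟩⟩
  · intro ht
    rcases eq_or_lt_of_le (htop.2 t ht) with heq | hlt0
    · exact ⟨0, heq.symm⟩
    · -- t < enum m 0
      have hex : ∃ i, enum m i < t := by
        refine ⟨(enum m 0 - t).toNat + 1, ?_⟩
        have h1 := strictAnti_le_sub hsa ((enum m 0 - t).toNat + 1)
        have h2 := Int.self_le_toNat (enum m 0 - t)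
        push_cast at h1
        omega
      classical
      have hfind := Nat.find_spec hex
      have hi'pos : Nat.find hex ≠ 0 := by
        intro h0
        rw [h0] at hfind
        omega
      obtain ⟨i2, hi2⟩ : ∃ i2, Nat.find hex = i2 + 1 := ⟨Nat.find hex - 1, by omega⟩
      have hnot : ¬ enum m i2 < t := Nat.find_min hex (by omega)
      push_neg at hnot
      rcases eq_or_lt_of_le hnot with heq | hlt2
      · exact ⟨i2, heq.symm⟩
      · exfalso
        have := (hbel i2).2 t ⟨ht, hlt2⟩
        rw [hi2] at hfind
        omega
  · rintro ⟨i, rfl⟩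
    exact hblack i

lemma IsEnum.rank {m : Maya} {k : ℕ → ℤ} (h : IsEnum m k) (i : ℕ) : nAbove m (k i) = i := by
  have hset : {j : ℤ | k i < j ∧ m.f j = true} = k '' Set.Iio i := by
    ext j
    simp only [Set.mem_setOf_eq, Set.mem_image, Set.mem_Iio]
    constructor
    · rintro ⟨hj1, hj2⟩
      obtain ⟨a, rfl⟩ := (h.2 j).mp hj2
      refine ⟨a, ?_, rfl⟩
      by_contra ha
      push_neg at ha
      have := h.1.antitone ha
      omega
    · rintro ⟨a, ha, rfl⟩
      exact ⟨h.1 ha, (h.2 (k a)).mpr ⟨a, rfl⟩⟩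
  rw [nAbove, hset, Set.ncard_image_of_injective _ h.1.injective,
    ← Finset.coe_range, Set.ncard_coe_finset, Finset.card_range]

lemma IsEnum.nAbove_eq_rk {m : Maya} {k : ℕ → ℤ} (h : IsEnum m k) (t : ℤ) :
    nAbove m t = rk k t := by
  have hset : {j : ℤ | t < j ∧ m.f j = true} = k '' Set.Iio (rk k t) := by
    ext j
    simp only [Set.mem_setOf_eq, Set.mem_image, Set.mem_Iio]
    constructor
    · rintro ⟨hj1, hj2⟩
      obtain ⟨a, rfl⟩ := (h.2 j).mp hj2
      exact ⟨a, (lt_rk_iff h.1 t a).mpr hj1, rfl⟩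
    · rintro ⟨a, ha, rfl⟩
      exact ⟨(lt_rk_iff h.1 t a).mp ha, (h.2 (k a)).mpr ⟨a, rfl⟩⟩
  rw [nAbove, hset, Set.ncard_image_of_injective _ h.1.injective,
    ← Finset.coe_range, Set.ncard_coe_finset, Finset.card_range]

lemma IsEnum.unique {m : Maya} {k k' : ℕ → ℤ} (h : IsEnum m k) (h' : IsEnum m k') : k = k' := by
  funext i
  obtain ⟨a, ha⟩ := (h.2 (k' i)).mp ((h'.2 (k' i)).mpr ⟨i, rfl⟩)
  have h1 : nAbove m (k a) = a := h.rank a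
  have h2 : nAbove m (k' i) = i := h'.rank i
  rw [ha] at h1
  rw [h1] at h2
  exact h2 ▸ ha

lemma IsEnum.black {m : Maya} {k : ℕ → ℤ} (h : IsEnum m k) (i : ℕ) : m.f (k i) = true :=
  (h.2 (k i)).mpr ⟨i, rfl⟩

/-- counting lemma : for `t` low enough, `nAbove m t = charge - t - 1`. -/
lemma nAbove_low {m : Maya} {Nb t : ℤ} (hNb : ∀ x, x < Nb → m.f x = true)
    (ht0 : t < 0) (htN : t < Nb) : (nAbove m t : ℤ) = m.charge - t - 1 := by
  classical
  set A := {x : ℤ | 0 ≤ x ∧ m.f x = true} with hA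
  set B := {x : ℤ | x < 0 ∧ m.f x = false} with hB
  have hBsub : B ⊆ Set.Ioo t 0 := by
    rintro x ⟨hx1, hx2⟩
    refine ⟨?_, hx1⟩
    by_contra hxx
    push_neg at hxx
    have := hNb x (by omega)
    simp_all
  have hsplit : {j : ℤ | t < j ∧ m.f j = true} = (Set.Ioo t 0 \ B) ∪ A := by
    ext j
    simp only [Set.mem_setOf_eq, Set.mem_union, Set.mem_diff, Set.mem_Ioo, hA, hB]
    constructor
    · rintro ⟨hj1, hj2⟩
      rcases lt_or_ge j 0 with hj0 | hj0
      · exact Or.inl ⟨⟨hj1, hj0⟩, by simp [hj2]⟩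
      · exact Or.inr ⟨hj0, hj2⟩
    · rintro (⟨⟨hj1, hj0⟩, hj2⟩ | ⟨hj0, hj2⟩)
      · simp only [Set.mem_setOf_eq, hj0, true_and] at hj2
        refine ⟨hj1, ?_⟩
        · cases hmf : m.f j
          · exact absurd hmf hj2
          · rfl
      · exact ⟨by omega, hj2⟩
  have hdisj : Disjoint (Set.Ioo t 0 \ B) A := by
    rw [Set.disjoint_left]
    rintro x ⟨⟨hx1, hx2⟩, _⟩ ⟨hx3, _⟩
    omega
  have hIoofin : (Set.Ioo t (0:ℤ)).Finite := Set.finite_Ioo t 0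
  have hcard : nAbove m t = (Set.Ioo t 0 \ B).ncard + A.ncard := by
    rw [nAbove, hsplit, Set.ncard_union_eq hdisj hIoofin.diff (finite_A m)]
  have hdiff : (Set.Ioo t 0 \ B).ncard = (Set.Ioo t 0).ncard - B.ncard :=
    Set.ncard_diff hBsub (finite_B m)
  have hBle : B.ncard ≤ (Set.Ioo t 0).ncard := Set.ncard_le_ncard hBsub hIoofin
  have hIoo : ((Set.Ioo t (0:ℤ)).ncard : ℤ) = -t - 1 := by
    rw [← Finset.coe_Ioo, Set.ncard_coe_finset, Int.card_Ioo,
      Int.toNat_of_nonneg (by omega)]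
    ring
  have hch : m.charge = (A.ncard : ℤ) - B.ncard := rfl
  omega

lemma IsEnum.tail {m : Maya} {k : ℕ → ℤ} (h : IsEnum m k) :
    ∃ i₀ : ℕ, ∀ i, i₀ ≤ i → k i = m.charge - i - 1 := by
  obtain ⟨Nb, hNb⟩ := m.black_small
  refine ⟨(k 0 - min 0 Nb).toNat + 1, fun i hi => ?_⟩
  have h1 := strictAnti_le_sub h.1 i
  have h2 := Int.self_le_toNat (k 0 - min 0 Nb)
  have hki : k i < min 0 Nb := by omega
  have h3 := nAbove_low hNb (t := k i) (by omega) (by omega)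
  have h4 := h.rank i
  rw [h4] at h3
  omega

lemma charge_flip (m : Maya) (t : ℤ) :
    (m.flip t).charge = m.charge + (if m.f t = true then -1 else 1) := by
  classical
  set A := {x : ℤ | 0 ≤ x ∧ m.f x = true} with hA
  set B := {x : ℤ | x < 0 ∧ m.f x = false} with hB
  set A' := {x : ℤ | 0 ≤ x ∧ (m.flip t).f x = true} with hA'
  set B' := {x : ℤ | x < 0 ∧ (m.flip t).f x = false} with hB'
  have hchm : m.charge = (A.ncard : ℤ) - B.ncard := rfl
  have hchf : (m.flip t).charge = (A'.ncard : ℤ) - B'.ncard := rfl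
  rcases le_or_gt 0 t with ht | ht
  · -- B' = B
    have hBeq : B' = B := by
      ext x
      simp only [hB, hB', Set.mem_setOf_eq, flip_f]
      constructor
      · rintro ⟨hx1, hx2⟩
        rw [if_neg (by omega)] at hx2
        exact ⟨hx1, hx2⟩
      · rintro ⟨hx1, hx2⟩
        rw [if_neg (by omega)]
        exact ⟨hx1, hx2⟩
    cases hft : m.f t with
    | true =>
      have hAeq : A' = A \ {t} := by
        ext x
        simp only [hA, hA', Set.mem_setOf_eq, Set.mem_diff, Set.mem_singleton_iff, flip_f]
        constructor
        · rintro ⟨hx1, hx2⟩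
          by_cases hxt : x = t
          · rw [if_pos hxt, hft] at hx2; simp at hx2
          · rw [if_neg hxt] at hx2
            exact ⟨⟨hx1, hx2⟩, hxt⟩
        · rintro ⟨⟨hx1, hx2⟩, hxt⟩
          rw [if_neg hxt]
          exact ⟨hx1, hx2⟩
      have htA : t ∈ A := ⟨ht, hft⟩
      have hcard : A'.ncard = A.ncard - 1 := by
        rw [hAeq]
        exact Set.ncard_diff_singleton_of_mem htA
      have hpos : 0 < A.ncard := (Set.ncard_pos (finite_A m)).mpr ⟨t, htA⟩
      rw [hchf, hchm, hBeq, hcard, if_pos rfl]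
      omega
    | false =>
      have hAeq : A' = insert t A := by
        ext x
        simp only [hA, hA', Set.mem_setOf_eq, Set.mem_insert_iff, flip_f]
        constructor
        · rintro ⟨hx1, hx2⟩
          by_cases hxt : x = t
          · exact Or.inl hxt
          · rw [if_neg hxt] at hx2
            exact Or.inr ⟨hx1, hx2⟩
        · rintro (rfl | ⟨hx1, hx2⟩)
          · refine ⟨ht, ?_⟩
            rw [if_pos rfl, hft]
            simp
          · refine ⟨hx1, ?_⟩
            by_cases hxt : x = t
            · subst hxt; rw [if_pos rfl, hft]; simp
            · rw [if_neg hxt]; exact hx2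
      have htA : t ∉ A := by
        rintro ⟨_, h2⟩
        rw [hft] at h2
        simp at h2
      have hcard : A'.ncard = A.ncard + 1 := by
        rw [hAeq, Set.ncard_insert_of_notMem htA (finite_A m)]
      rw [hchf, hchm, hBeq, hcard, if_neg (by simp)]
      omega
  · -- t < 0 : A' = A
    have hAeq : A' = A := by
      ext x
      simp only [hA, hA', Set.mem_setOf_eq, flip_f]
      constructor
      · rintro ⟨hx1, hx2⟩
        rw [if_neg (by omega)] at hx2
        exact ⟨hx1, hx2⟩
      · rintro ⟨hx1, hx2⟩
        rw [if_neg (by omega)]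
        exact ⟨hx1, hx2⟩
    cases hft : m.f t with
    | true =>
      have hBeq : B' = insert t B := by
        ext x
        simp only [hB, hB', Set.mem_setOf_eq, Set.mem_insert_iff, flip_f]
        constructor
        · rintro ⟨hx1, hx2⟩
          by_cases hxt : x = t
          · exact Or.inl hxt
          · rw [if_neg hxt] at hx2
            exact Or.inr ⟨hx1, hx2⟩
        · rintro (rfl | ⟨hx1, hx2⟩)
          · refine ⟨ht, ?_⟩
            rw [if_pos rfl, hft]
            simp
          · refine ⟨hx1, ?_⟩
            by_cases hxt : x = t
            · subst hxt; rw [if_pos rfl, hft]; simp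
            · rw [if_neg hxt]; exact hx2
      have htB : t ∉ B := by
        rintro ⟨_, h2⟩
        rw [hft] at h2
        simp at h2
      have hcard : B'.ncard = B.ncard + 1 := by
        rw [hBeq, Set.ncard_insert_of_notMem htB (finite_B m)]
      rw [hchf, hchm, hAeq, hcard, if_pos rfl]
      omega
    | false =>
      have hBeq : B' = B \ {t} := by
        ext x
        simp only [hB, hB', Set.mem_setOf_eq, Set.mem_diff, Set.mem_singleton_iff, flip_f]
        constructor
        · rintro ⟨hx1, hx2⟩
          by_cases hxt : x = t
          · rw [if_pos hxt, hft] at hx2; simp at hx2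
          · rw [if_neg hxt] at hx2
            exact ⟨⟨hx1, hx2⟩, hxt⟩
        · rintro ⟨⟨hx1, hx2⟩, hxt⟩
          rw [if_neg hxt]
          exact ⟨hx1, hx2⟩
      have htB : t ∈ B := ⟨ht, hft⟩
      have hcard : B'.ncard = B.ncard - 1 := by
        rw [hBeq]
        exact Set.ncard_diff_singleton_of_mem htB
      have hpos : 0 < B.ncard := (Set.ncard_pos (finite_B m)).mpr ⟨t, htB⟩
      rw [hchf, hchm, hAeq, hcard, if_neg (by simp)]
      omega

end S12
namespace S12

def delS (k : ℕ → ℤ) (r : ℕ) : ℕ → ℤ := fun a => if a < r then k a else k (a + 1)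

def insS (k : ℕ → ℤ) (i : ℕ) (t : ℤ) : ℕ → ℤ :=
  fun a => if a < i then k a else if a = i then t else k (a - 1)

def StripL (x y : ℕ → ℤ) : Prop := ∀ i, x i ≤ y i ∧ y (i + 1) < x i

def StripR (x y : ℕ → ℤ) : Prop := ∀ i, x i ≤ y i ∧ y i ≤ x i + 1

lemma IsEnum.del {m : Maya} {k : ℕ → ℤ} (h : IsEnum m k) (r : ℕ) :
    IsEnum (m.flip (k r)) (delS k r) := by
  have hstep : ∀ a b : ℕ, a < b → k b < k a := fun a b hab => h.1 hab
  constructor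
  · apply strictAnti_nat_of_succ_lt
    intro a
    simp only [delS]
    rcases lt_trichotomy (a+1) r with hr | hr | hr
    · rw [if_pos hr, if_pos (by omega)]
      exact hstep _ _ (by omega)
    · rw [if_neg (by omega), if_pos (by omega)]
      exact hstep _ _ (by omega)
    · rw [if_neg (by omega), if_neg (by omega)]
      exact hstep _ _ (by omega)
  · intro t
    rw [flip_f]
    by_cases htr : t = k r
    · rw [if_pos htr, h.black r]
      simp only [Bool.not_true]
      constructor
      · intro hf; exact absurd hf (by simp)
      · rintro ⟨a, ha⟩
        exfalso
        simp only [delS] at ha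
        split_ifs at ha with ha2
        · have := hstep a r ha2; omega
        · have : r < a + 1 := by omega
          have := hstep r (a+1) this
          omega
    · rw [if_neg htr, h.2]
      constructor
      · rintro ⟨a, ha⟩
        have har : a ≠ r := fun hh => htr (by rw [← ha, hh])
        rcases lt_or_gt_of_ne har with h1 | h1
        · exact ⟨a, by simp only [delS, if_pos h1]; exact ha⟩
        · refine ⟨a - 1, ?_⟩
          simp only [delS, if_neg (by omega : ¬ (a - 1 < r))]
          rw [(by omega : a - 1 + 1 = a)]
          exact ha
      · rintro ⟨a, ha⟩
        simp only [delS] at ha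
        split_ifs at ha
        · exact ⟨a, ha⟩
        · exact ⟨a + 1, ha⟩

lemma IsEnum.ins {m : Maya} {k : ℕ → ℤ} {t : ℤ} (h : IsEnum m k) (ht : m.f t = false) :
    IsEnum (m.flip t) (insS k (rk k t) t) := by
  set i := rk k t with hi
  have hne : ∀ a, k a ≠ t := by
    intro a ha
    have := h.black a
    rw [ha, ht] at this
    simp at this
  have hgt : ∀ a, a < i → t < k a := fun a ha => (lt_rk_iff h.1 t a).mp ha
  have hle : ∀ a, i ≤ a → k a < t := by
    intro a ha
    have h1 := (rk_le_iff h.1 t a).mp ha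
    rcases lt_or_eq_of_le h1 with h2 | h2
    · exact h2
    · exact absurd h2 (hne a)
  constructor
  · apply strictAnti_nat_of_succ_lt
    intro a
    rcases lt_trichotomy (a+1) i with hr | hr | hr
    · have e1 : insS k i t (a+1) = k (a+1) := if_pos hr
      have e2 : insS k i t a = k a := if_pos (by omega)
      rw [e1, e2]
      exact h.1 (by omega)
    · have e1 : insS k i t (a+1) = t := by
        simp only [insS]
        rw [if_neg (by omega), if_pos hr]
      have e2 : insS k i t a = k a := if_pos (by omega)
      rw [e1, e2]
      exact hgt a (by omega)
    · have e1 : insS k i t (a+1) = k a := by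
        simp only [insS]
        rw [if_neg (by omega), if_neg (by omega)]
        congr 1
      by_cases h2 : a = i
      · have e2 : insS k i t a = t := by
          simp only [insS]
          rw [if_neg (by omega), if_pos h2]
        rw [e1, e2]
        exact hle a (by omega)
      · have e2 : insS k i t a = k (a-1) := by
          simp only [insS]
          rw [if_neg (by omega), if_neg (by omega)]
        rw [e1, e2]
        exact h.1 (by omega)
  · intro s
    rw [flip_f]
    by_cases hst : s = t
    · subst hst
      rw [if_pos rfl, ht]
      simp only [Bool.not_false]
      constructor
      · intro _
        exact ⟨i, by simp [insS]⟩
      · intro _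
        trivial
    · rw [if_neg hst, h.2]
      constructor
      · rintro ⟨a, ha⟩
        rcases lt_or_ge a i with h1 | h1
        · exact ⟨a, by simp only [insS, if_pos h1]; exact ha⟩
        · refine ⟨a + 1, ?_⟩
          simp only [insS, if_neg (by omega : ¬ (a + 1 < i)), if_neg (by omega : ¬ (a + 1 = i))]
          rw [(by omega : a + 1 - 1 = a)]
          exact ha
      · rintro ⟨a, ha⟩
        simp only [insS] at ha
        split_ifs at ha
        · exact ⟨a, ha⟩
        · exact absurd ha.symm hst
        · exact ⟨a - 1, ha⟩

lemma IsEnum.ge {m : Maya} {k : ℕ → ℤ} (h : IsEnum m k) (i : ℕ) :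
    m.charge - i - 1 ≤ k i := by
  obtain ⟨i₀, hi₀⟩ := h.tail
  have key : ∀ b : ℕ, i ≤ b → k b + (b : ℤ) ≤ k i + i := by
    intro b hb
    induction b, hb using Nat.le_induction with
    | base => omega
    | succ b hb ih =>
      have h2 : k (b + 1) < k b := h.1 (by omega)
      push_cast
      omega
  have h1 := key (max i i₀) (le_max_left _ _)
  have h2 := hi₀ (max i i₀) (le_max_right _ _)
  rw [h2] at h1
  push_cast at h1
  omega

lemma sizeF_eq_sum {lam : ℕ → ℕ} {N : ℕ} (h : ∀ i, N ≤ i → lam i = 0) :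
    sizeF lam = ∑ i ∈ Finset.range N, lam i := by
  rw [sizeF]
  apply finsum_eq_sum_of_support_subset
  intro x hx
  simp only [Function.mem_support] at hx
  simp only [Finset.coe_range, Set.mem_Iio]
  by_contra hh
  exact hx (h x (by omega))

lemma corresponds_iff {m : Maya} {k : ℕ → ℤ} (h : IsEnum m k) (lam : ℕ → ℕ) (c : ℤ) :
    Corresponds m lam c ↔ c = m.charge ∧ ∀ i : ℕ, (lam i : ℤ) = k i - c + i + 1 := by
  constructor
  · rintro ⟨hc, k', hk1, hk2, hk3⟩
    have he : k' = k := IsEnum.unique ⟨hk1, hk2⟩ h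
    exact ⟨hc, fun i => by rw [hk3 i, he]⟩
  · rintro ⟨hc, hl⟩
    exact ⟨hc, k, h.1, h.2, hl⟩

end S12
namespace S12

section MP

variable {mlow mhigh : Maya} {klow khigh : ℕ → ℤ}

lemma sum_transfer {c : ℤ} {lam mu : ℕ → ℕ} {N p : ℕ}
    (hlam : ∀ i : ℕ, (lam i : ℤ) = khigh i - c + i + 1)
    (hmu : ∀ i : ℕ, (mu i : ℤ) = klow i - c + i + 1)
    (hNl : ∀ i, N ≤ i → klow i = c - i - 1)
    (hNh : ∀ i, N ≤ i → khigh i = c - i - 1) :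
    (sizeF lam = sizeF mu + p ↔ ∑ i ∈ Finset.range N, (khigh i - klow i) = (p : ℤ)) := by
  have hlz : ∀ i, N ≤ i → lam i = 0 := by
    intro i hi
    have h1 := hlam i
    have h2 := hNh i hi
    omega
  have hmz : ∀ i, N ≤ i → mu i = 0 := by
    intro i hi
    have h1 := hmu i
    have h2 := hNl i hi
    omega
  rw [sizeF_eq_sum hlz, sizeF_eq_sum hmz]
  have key : ∑ i ∈ Finset.range N, (khigh i - klow i) =
      (∑ i ∈ Finset.range N, (lam i : ℤ)) - ∑ i ∈ Finset.range N, (mu i : ℤ) := by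
    rw [← Finset.sum_sub_distrib]
    apply Finset.sum_congr rfl
    intro i _
    have h1 := hlam i
    have h2 := hmu i
    omega
  rw [key]
  constructor
  · intro h
    have h2 : ((∑ i ∈ Finset.range N, lam i : ℕ) : ℤ) =
        ((∑ i ∈ Finset.range N, mu i : ℕ) : ℤ) + p := by
      exact_mod_cast h
    push_cast at h2
    omega
  · intro h
    have h2 : ((∑ i ∈ Finset.range N, lam i : ℕ) : ℤ) = ((∑ i ∈ Finset.range N, mu i : ℕ) : ℤ) + p := by
      push_cast
      omega
    exact_mod_cast h2

lemma mayaPrecL_iff (hlo : IsEnum mlow klow) (hhi : IsEnum mhigh khigh)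
    (hc : mlow.charge = mhigh.charge)
    {N : ℕ} (hNl : ∀ i, N ≤ i → klow i = mlow.charge - i - 1)
    (hNh : ∀ i, N ≤ i → khigh i = mhigh.charge - i - 1) (p : ℕ) :
    MayaPrec true mlow mhigh p ↔
      StripL klow khigh ∧ ∑ i ∈ Finset.range N, (khigh i - klow i) = (p : ℤ) := by
  constructor
  · rintro ⟨c, lam, mu, hcl, hcm, hint, hsz⟩
    rw [corresponds_iff hhi] at hcl
    rw [corresponds_iff hlo] at hcm
    obtain ⟨hc1, hlam⟩ := hcl
    obtain ⟨hc2, hmu⟩ := hcm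
    rw [if_pos rfl] at hint
    constructor
    · intro i
      have h1 : (mu i : ℤ) ≤ lam i := by exact_mod_cast (hint i).1
      have h2 : (lam (i+1) : ℤ) ≤ mu i := by exact_mod_cast (hint i).2
      have e1 := hlam i
      have e2 := hmu i
      have e3 := hlam (i+1)
      push_cast at e3
      omega
    · rw [← sum_transfer hlam hmu (by rw [hc2]; exact hNl) (by rw [hc1]; exact hNh)]
      exact hsz
  · rintro ⟨hstrip, hsum⟩
    have hgel : ∀ i : ℕ, 0 ≤ klow i - mlow.charge + i + 1 := by
      intro i
      have := hlo.ge i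
      omega
    have hgeh : ∀ i : ℕ, 0 ≤ khigh i - mlow.charge + i + 1 := by
      intro i
      have := hhi.ge i
      omega
    set c := mlow.charge with hcdef
    have hlam : ∀ i : ℕ, (((khigh i - c + i + 1).toNat : ℤ)) = khigh i - c + i + 1 :=
      fun i => Int.toNat_of_nonneg (hgeh i)
    have hmu : ∀ i : ℕ, (((klow i - c + i + 1).toNat : ℤ)) = klow i - c + i + 1 :=
      fun i => Int.toNat_of_nonneg (hgel i)
    refine ⟨c, fun i => (khigh i - c + i + 1).toNat, fun i => (klow i - c + i + 1).toNat,
      ?_, ?_, ?_, ?_⟩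
    · rw [corresponds_iff hhi]
      exact ⟨hc, hlam⟩
    · rw [corresponds_iff hlo]
      exact ⟨rfl, hmu⟩
    · rw [if_pos rfl]
      intro i
      have h1 := (hstrip i).1
      have h2 := (hstrip i).2
      constructor
      · exact Int.toNat_le_toNat (by omega)
      · apply Int.toNat_le_toNat
        push_cast
        omega
    · exact (sum_transfer hlam hmu hNl (by rw [hc]; exact hNh)).mpr hsum

lemma mayaPrecR_iff (hlo : IsEnum mlow klow) (hhi : IsEnum mhigh khigh)
    (hc : mlow.charge = mhigh.charge)
    {N : ℕ} (hNl : ∀ i, N ≤ i → klow i = mlow.charge - i - 1)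
    (hNh : ∀ i, N ≤ i → khigh i = mhigh.charge - i - 1) (p : ℕ) :
    MayaPrec false mlow mhigh p ↔
      StripR klow khigh ∧ ∑ i ∈ Finset.range N, (khigh i - klow i) = (p : ℤ) := by
  constructor
  · rintro ⟨c, lam, mu, hcl, hcm, hint, hsz⟩
    rw [corresponds_iff hhi] at hcl
    rw [corresponds_iff hlo] at hcm
    obtain ⟨hc1, hlam⟩ := hcl
    obtain ⟨hc2, hmu⟩ := hcm
    rw [if_neg (by simp)] at hint
    have hal : Antitone lam := by
      apply antitone_nat_of_succ_le
      intro i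
      have e1 := hlam i
      have e2 := hlam (i+1)
      push_cast at e2
      have h3 := hhi.1 (show i < i + 1 by omega)
      have : (lam (i+1) : ℤ) ≤ lam i := by omega
      exact_mod_cast this
    have ham : Antitone mu := by
      apply antitone_nat_of_succ_le
      intro i
      have e1 := hmu i
      have e2 := hmu (i+1)
      push_cast at e2
      have h3 := hlo.1 (show i < i + 1 by omega)
      have : (mu (i+1) : ℤ) ≤ mu i := by omega
      exact_mod_cast this
    have hlz : ∀ i, N ≤ i → lam i = 0 := by
      intro i hi
      have h1 := hlam i
      have h2 := hNh i hi
      omega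
    have hmz : ∀ i, N ≤ i → mu i = 0 := by
      intro i hi
      have h1 := hmu i
      have h2 := hNl i hi
      omega
    rw [interF_conj_iff hal ham hlz hmz] at hint
    constructor
    · intro i
      have h1 : (mu i : ℤ) ≤ lam i := by exact_mod_cast (hint i).1
      have h2 : (lam i : ℤ) ≤ mu i + 1 := by exact_mod_cast (hint i).2
      have e1 := hlam i
      have e2 := hmu i
      omega
    · rw [← sum_transfer hlam hmu (by rw [hc2]; exact hNl) (by rw [hc1]; exact hNh)]
      exact hsz
  · rintro ⟨hstrip, hsum⟩
    have hgel : ∀ i : ℕ, 0 ≤ klow i - mlow.charge + i + 1 := by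
      intro i
      have := hlo.ge i
      omega
    have hgeh : ∀ i : ℕ, 0 ≤ khigh i - mlow.charge + i + 1 := by
      intro i
      have := hhi.ge i
      omega
    set c := mlow.charge with hcdef
    have hlam : ∀ i : ℕ, (((khigh i - c + i + 1).toNat : ℤ)) = khigh i - c + i + 1 :=
      fun i => Int.toNat_of_nonneg (hgeh i)
    have hmu : ∀ i : ℕ, (((klow i - c + i + 1).toNat : ℤ)) = klow i - c + i + 1 :=
      fun i => Int.toNat_of_nonneg (hgel i)
    refine ⟨c, fun i => (khigh i - c + i + 1).toNat, fun i => (klow i - c + i + 1).toNat,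
      ?_, ?_, ?_, ?_⟩
    · rw [corresponds_iff hhi]
      exact ⟨hc, hlam⟩
    · rw [corresponds_iff hlo]
      exact ⟨rfl, hmu⟩
    · rw [if_neg (by simp)]
      have hal : Antitone (fun i => (khigh i - c + i + 1).toNat) := by
        apply antitone_nat_of_succ_le
        intro i
        have e1 := hlam i
        have e2 := hlam (i+1)
        push_cast at e2
        have h3 := hhi.1 (show i < i + 1 by omega)
        apply Int.toNat_le_toNat
        push_cast
        omega
      have ham : Antitone (fun i => (klow i - c + i + 1).toNat) := by
        apply antitone_nat_of_succ_le
        intro i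
        have h3 := hlo.1 (show i < i + 1 by omega)
        apply Int.toNat_le_toNat
        push_cast
        omega
      have hlz : ∀ i, N ≤ i → (khigh i - c + i + 1).toNat = 0 := by
        intro i hi
        have h1 := hNh i hi
        have h2 := hlam i
        omega
      have hmz : ∀ i, N ≤ i → (klow i - c + i + 1).toNat = 0 := by
        intro i hi
        have h1 := hNl i hi
        have h2 := hmu i
        omega
      rw [interF_conj_iff hal ham hlz hmz]
      intro i
      have h1 := (hstrip i).1
      have h2 := (hstrip i).2
      constructor
      · exact Int.toNat_le_toNat (by omega)
      · have e1 := hlam i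
        have e2 := hmu i
        omega
    · exact (sum_transfer hlam hmu hNl (by rw [hc]; exact hNh)).mpr hsum

lemma mayaPrec_charge {a : Bool} {m1 m2 : Maya} {p : ℕ} (h : MayaPrec a m1 m2 p) :
    m1.charge = m2.charge := by
  obtain ⟨c, lam, mu, hcl, hcm, _, _⟩ := h
  rw [← hcl.1, ← hcm.1]

end MP

end S12
namespace S12

lemma delS_lt {k : ℕ → ℤ} {r a : ℕ} (h : a < r) : delS k r a = k a := if_pos h

lemma delS_ge {k : ℕ → ℤ} {r a : ℕ} (h : r ≤ a) : delS k r a = k (a + 1) := by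
  simp only [delS]
  rw [if_neg (by omega)]

lemma insS_lt {K : ℕ → ℤ} {i a : ℕ} {t : ℤ} (h : a < i) : insS K i t a = K a := if_pos h

lemma insS_self {K : ℕ → ℤ} {i : ℕ} {t : ℤ} : insS K i t i = t := by
  simp [insS]

lemma insS_gt {K : ℕ → ℤ} {i a : ℕ} {t : ℤ} (h : i < a) : insS K i t a = K (a - 1) := by
  simp only [insS]
  rw [if_neg (by omega), if_neg (by omega)]

def PL (k1 K : ℕ → ℤ) (a : ℕ) : Prop := k1 a ≤ K a ∧ K (a + 1) < k1 a
def RL (k1 K : ℕ → ℤ) (a : ℕ) : Prop := k1 (a + 1) ≤ K a ∧ K (a + 1) < k1 (a + 1)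
def PRR (k1 K : ℕ → ℤ) (a : ℕ) : Prop := k1 a ≤ K a ∧ K a ≤ k1 a + 1
def RRR (k1 K : ℕ → ℤ) (a : ℕ) : Prop := k1 (a + 1) ≤ K a ∧ K a ≤ k1 (a + 1) + 1
def GoodL (k1 K : ℕ → ℤ) (r : ℕ) : Prop :=
  (∀ a, a < r → PL k1 K a) ∧ (∀ a, r ≤ a → RL k1 K a)
def GoodR (k1 K : ℕ → ℤ) (r : ℕ) : Prop :=
  (∀ a, a < r → PRR k1 K a) ∧ (∀ a, r ≤ a → RRR k1 K a)

def SD (k1 K : ℕ → ℤ) (i₀ : ℕ) (n : ℤ) : ℤ :=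
  (n - k1 0) + ∑ a ∈ Finset.range i₀, (K a - k1 (a + 1))

lemma SD_decomp {k1 K : ℕ → ℤ} {i₀ : ℕ} (htail : ∀ a, i₀ ≤ a → k1 (a + 1) = K a)
    (n : ℤ) (r N : ℕ) (hr : r ≤ N) (hN : i₀ ≤ N) :
    SD k1 K i₀ n = (∑ a ∈ Finset.range r, (K a - k1 a)) + (n - k1 r)
      + ∑ a ∈ Finset.Ico r N, (K a - k1 (a + 1)) := by
  induction r with
  | zero =>
    simp only [Finset.range_zero, Finset.sum_empty, zero_add]
    rw [SD]
    have h1 : ∑ a ∈ Finset.Ico 0 N, (K a - k1 (a + 1))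
        = ∑ a ∈ Finset.range N, (K a - k1 (a + 1)) := by
      rw [← Finset.range_eq_Ico]
    have h2 : ∑ a ∈ Finset.range i₀, (K a - k1 (a + 1))
        = ∑ a ∈ Finset.range N, (K a - k1 (a + 1)) := by
      apply Finset.sum_subset (Finset.range_subset_range.mpr hN)
      intro x hx hnx
      have : i₀ ≤ x := by
        simp only [Finset.mem_range, not_lt] at hnx
        exact hnx
      rw [htail x this]
      ring
    rw [h1, ← h2]
  | succ r ih =>
    have ih2 := ih (by omega)
    rw [Finset.sum_range_succ]
    have h3 : ∑ a ∈ Finset.Ico r N, (K a - k1 (a + 1))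
        = (K r - k1 (r + 1)) + ∑ a ∈ Finset.Ico (r + 1) N, (K a - k1 (a + 1)) :=
      Finset.sum_eq_sum_Ico_succ_bot (by omega) _
    rw [h3] at ih2
    rw [ih2]
    ring

lemma sum_del {k1 K : ℕ → ℤ} {i₀ : ℕ} (htail : ∀ a, i₀ ≤ a → k1 (a + 1) = K a)
    (n : ℤ) (r N : ℕ) (hr : r ≤ N) (hN : i₀ ≤ N) :
    ∑ a ∈ Finset.range N, (K a - delS k1 r a) = SD k1 K i₀ n - (n - k1 r) := by
  rw [SD_decomp htail n r N hr hN]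
  have hsplit : ∑ a ∈ Finset.range N, (K a - delS k1 r a)
      = ∑ a ∈ Finset.range r, (K a - delS k1 r a)
        + ∑ a ∈ Finset.Ico r N, (K a - delS k1 r a) := by
    rw [Finset.range_eq_Ico, ← Finset.sum_Ico_consecutive _ (Nat.zero_le r) hr,
      ← Finset.range_eq_Ico]
  rw [hsplit]
  have e1 : ∑ a ∈ Finset.range r, (K a - delS k1 r a) = ∑ a ∈ Finset.range r, (K a - k1 a) :=
    Finset.sum_congr rfl (fun a ha => by rw [delS_lt (Finset.mem_range.mp ha)])
  have e2 : ∑ a ∈ Finset.Ico r N, (K a - delS k1 r a)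
      = ∑ a ∈ Finset.Ico r N, (K a - k1 (a + 1)) :=
    Finset.sum_congr rfl (fun a ha => by rw [delS_ge (Finset.mem_Ico.mp ha).1])
  rw [e1, e2]
  ring

lemma sum_ins {k1 K : ℕ → ℤ} {i₀ : ℕ} (htail : ∀ a, i₀ ≤ a → k1 (a + 1) = K a)
    (n : ℤ) (i N : ℕ) (hiN : i < N) (hN : i₀ + 1 ≤ N) :
    ∑ a ∈ Finset.range N, (insS K i n a - k1 a) = SD k1 K i₀ n := by
  rw [SD_decomp htail n i (N - 1) (by omega) (by omega)]
  have h1 : ∑ a ∈ Finset.range N, (insS K i n a - k1 a)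
      = (∑ a ∈ Finset.range i, (insS K i n a - k1 a) + (insS K i n i - k1 i))
        + ∑ a ∈ Finset.Ico (i + 1) N, (insS K i n a - k1 a) := by
    rw [Finset.range_eq_Ico,
      ← Finset.sum_Ico_consecutive _ (Nat.zero_le (i + 1)) (by omega : i + 1 ≤ N),
      ← Finset.range_eq_Ico, Finset.sum_range_succ]
  rw [h1]
  have e1 : ∑ a ∈ Finset.range i, (insS K i n a - k1 a)
      = ∑ a ∈ Finset.range i, (K a - k1 a) :=
    Finset.sum_congr rfl (fun a ha => by rw [insS_lt (Finset.mem_range.mp ha)])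
  have e2 : insS K i n i - k1 i = n - k1 i := by rw [insS_self]
  have e3 : ∑ a ∈ Finset.Ico (i + 1) N, (insS K i n a - k1 a)
      = ∑ a ∈ Finset.Ico i (N - 1), (K a - k1 (a + 1)) := by
    rw [Finset.sum_Ico_eq_sum_range, Finset.sum_Ico_eq_sum_range]
    apply Finset.sum_congr (by congr 1; omega)
    intro x _
    rw [insS_gt (by omega : i < i + 1 + x)]
    have e4 : i + 1 + x - 1 = i + x := by omega
    have e5 : i + 1 + x = i + x + 1 := by omega
    rw [e4, e5]
  rw [e1, e2, e3]

lemma GoodL.le_SD {k1 K : ℕ → ℤ} {i₀ : ℕ} (htail : ∀ a, i₀ ≤ a → k1 (a + 1) = K a)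
    {r : ℕ} (hg : GoodL k1 K r) (n : ℤ) : n - k1 r ≤ SD k1 K i₀ n := by
  rw [SD_decomp htail n r (max r i₀) (le_max_left _ _) (le_max_right _ _)]
  have h1 : 0 ≤ ∑ a ∈ Finset.range r, (K a - k1 a) :=
    Finset.sum_nonneg (fun a ha => by
      have := (hg.1 a (Finset.mem_range.mp ha)).1
      omega)
  have h2 : 0 ≤ ∑ a ∈ Finset.Ico r (max r i₀), (K a - k1 (a + 1)) :=
    Finset.sum_nonneg (fun a ha => by
      have := (hg.2 a (Finset.mem_Ico.mp ha).1).1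
      omega)
  omega

lemma GoodR.le_SD {k1 K : ℕ → ℤ} {i₀ : ℕ} (htail : ∀ a, i₀ ≤ a → k1 (a + 1) = K a)
    {r : ℕ} (hg : GoodR k1 K r) (n : ℤ) : n - k1 r ≤ SD k1 K i₀ n := by
  rw [SD_decomp htail n r (max r i₀) (le_max_left _ _) (le_max_right _ _)]
  have h1 : 0 ≤ ∑ a ∈ Finset.range r, (K a - k1 a) :=
    Finset.sum_nonneg (fun a ha => by
      have := (hg.1 a (Finset.mem_range.mp ha)).1
      omega)
  have h2 : 0 ≤ ∑ a ∈ Finset.Ico r (max r i₀), (K a - k1 (a + 1)) :=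
    Finset.sum_nonneg (fun a ha => by
      have := (hg.2 a (Finset.mem_Ico.mp ha).1).1
      omega)
  omega

lemma GoodL.dist {k1 K : ℕ → ℤ} {r r' : ℕ} (h : GoodL k1 K r) (h' : GoodL k1 K r')
    (hrr : r < r') : r' = r + 1 := by
  by_contra hne
  have hP := h'.1 (r + 1) (by omega)
  have hR := h.2 r (le_refl r)
  have h1 := hP.1
  have h2 := hR.2
  omega

lemma bridge_delL {k1 K : ℕ → ℤ} (r : ℕ) : StripL (delS k1 r) K ↔ GoodL k1 K r := by
  constructor
  · intro hs
    constructor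
    · intro a ha
      have h1 := (hs a).1
      have h2 := (hs a).2
      rw [delS_lt ha] at h1 h2
      exact ⟨h1, h2⟩
    · intro a ha
      have h1 := (hs a).1
      have h2 := (hs a).2
      rw [delS_ge ha] at h1 h2
      exact ⟨h1, h2⟩
  · intro hg a
    by_cases ha : a < r
    · have := hg.1 a ha
      rw [delS_lt ha]
      exact this
    · have := hg.2 a (by omega)
      rw [delS_ge (by omega)]
      exact this

lemma bridge_delR {k1 K : ℕ → ℤ} (r : ℕ) : StripR (delS k1 r) K ↔ GoodR k1 K r := by
  constructor
  · intro hs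
    constructor
    · intro a ha
      have h1 := (hs a).1
      have h2 := (hs a).2
      rw [delS_lt ha] at h1 h2
      exact ⟨h1, h2⟩
    · intro a ha
      have h1 := (hs a).1
      have h2 := (hs a).2
      rw [delS_ge ha] at h1 h2
      exact ⟨h1, h2⟩
  · intro hg a
    by_cases ha : a < r
    · have := hg.1 a ha
      rw [delS_lt ha]
      exact this
    · have := hg.2 a (by omega)
      rw [delS_ge (by omega)]
      exact this

lemma bridge_insR {k1 K : ℕ → ℤ} {n : ℤ} :
    StripR k1 (insS K (rk K n) n) ↔
      (GoodR k1 K (rk K n) ∧ (k1 (rk K n) = n ∨ k1 (rk K n) = n - 1)) := by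
  constructor
  · intro hs
    have hi := hs (rk K n)
    rw [insS_self] at hi
    refine ⟨⟨?_, ?_⟩, by omega⟩
    · intro a ha
      have h := hs a
      rw [insS_lt ha] at h
      exact h
    · intro a ha
      have h := hs (a + 1)
      rw [insS_gt (by omega : rk K n < a + 1)] at h
      rw [(by omega : a + 1 - 1 = a)] at h
      exact h
  · rintro ⟨⟨hP, hR⟩, hn⟩
    intro a
    rcases lt_trichotomy a (rk K n) with ha | ha | ha
    · rw [insS_lt ha]
      exact hP a ha
    · subst ha
      rw [insS_self]
      omega
    · rw [insS_gt ha]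
      have h1 := (hR (a - 1) (by omega)).1
      have h2 := (hR (a - 1) (by omega)).2
      rw [(by omega : a - 1 + 1 = a)] at h1 h2
      exact ⟨h1, h2⟩

lemma bridge_insL {k1 K : ℕ → ℤ} {n : ℤ} (hk1 : StrictAnti k1) (hK : StrictAnti K)
    (hwhite : ∀ a, K a ≠ n) :
    StripL k1 (insS K (rk K n) n) ↔
      (GoodL k1 K (rk k1 n) ∧ K (rk k1 n) < k1 (rk k1 n)) := by
  constructor
  · intro hs
    have hk1i : k1 (rk K n) ≤ n := by
      have := (hs (rk K n)).1
      rwa [insS_self] at this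
    have hKi : K (rk K n) < k1 (rk K n) := by
      have := (hs (rk K n)).2
      rwa [insS_gt (by omega : rk K n < rk K n + 1),
        (by omega : rk K n + 1 - 1 = rk K n)] at this
    have hiρ : rk k1 n = rk K n := by
      apply rk_eq_of_between hk1 hk1i
      rcases Nat.eq_zero_or_pos (rk K n) with h0 | h0
      · left; exact h0
      · right
        have := (hs (rk K n - 1)).2
        rwa [(by omega : rk K n - 1 + 1 = rk K n), insS_self] at this
    rw [hiρ]
    refine ⟨⟨?_, ?_⟩, hKi⟩
    · intro a ha
      have h1 := (hs a).1
      rw [insS_lt ha] at h1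
      refine ⟨h1, ?_⟩
      rcases lt_or_eq_of_le (by omega : a + 1 ≤ rk K n) with h2 | h2
      · have h3 := (hs a).2
        rwa [insS_lt h2] at h3
      · rw [h2]
        have h4 : k1 (rk K n) < k1 a := hk1 (by omega)
        omega
    · intro a ha
      constructor
      · have h1 := (hs (a + 1)).1
        rwa [insS_gt (by omega : rk K n < a + 1), (by omega : a + 1 - 1 = a)] at h1
      · have h2 := (hs (a + 1)).2
        rwa [insS_gt (by omega : rk K n < a + 2), (by omega : a + 1 + 1 - 1 = a + 1)] at h2
  · rintro ⟨hg, hlt⟩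
    have hk1ρ : k1 (rk k1 n) ≤ n := (rk_le_iff hk1 n _).mp le_rfl
    have hρi : rk K n = rk k1 n := by
      apply rk_eq_of_between hK (by omega)
      rcases Nat.eq_zero_or_pos (rk k1 n) with h0 | h0
      · left; exact h0
      · right
        have h1 := (hg.1 (rk k1 n - 1) (by omega)).1
        have h2 : n < k1 (rk k1 n - 1) := (lt_rk_iff hk1 n _).mp (by omega)
        omega
    rw [hρi]
    intro a
    rcases lt_trichotomy a (rk k1 n) with ha | ha | ha
    · rw [insS_lt ha]
      refine ⟨(hg.1 a ha).1, ?_⟩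
      rcases lt_or_eq_of_le (by omega : a + 1 ≤ rk k1 n) with h2 | h2
      · rw [insS_lt h2]
        exact (hg.1 a ha).2
      · rw [h2, insS_self]
        have : a = rk k1 n - 1 := by omega
        exact (lt_rk_iff hk1 n a).mp ha
    · rw [ha, insS_self]
      refine ⟨hk1ρ, ?_⟩
      rw [insS_gt (by omega : rk k1 n < rk k1 n + 1), (by omega : rk k1 n + 1 - 1 = rk k1 n)]
      exact hlt
    · rw [insS_gt ha, insS_gt (by omega : rk k1 n < a + 1), (by omega : a + 1 - 1 = a)]
      have h1 := (hg.2 (a - 1) (by omega)).1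
      have h2 := (hg.2 (a - 1) (by omega)).2
      rw [(by omega : a - 1 + 1 = a)] at h1 h2
      exact ⟨h1, h2⟩

end S12
namespace S12

section Core

variable {k1 K : ℕ → ℤ} {i₀ : ℕ} {n : ℤ} {p : ℕ}

/-- If `k1 r = n` and `GoodR r` then `r` is the rank of `n` in `K`. -/
lemma D1R (hk1 : StrictAnti k1) (hK : StrictAnti K) {r : ℕ}
    (hr : k1 r = n) (hg : GoodR k1 K r) : rk K n = r := by
  apply rk_eq_of_between hK
  · have h2 := (hg.2 r le_rfl).2
    have h3 : k1 (r + 1) < k1 r := hk1 (by omega)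
    omega
  · rcases Nat.eq_zero_or_pos r with h0 | h0
    · left; exact h0
    · right
      have h1 := (hg.1 (r - 1) (by omega)).1
      have h2 : k1 r < k1 (r - 1) := hk1 (by omega)
      omega

/-- If `k1 r = n - 1`, `GoodR r`, and `n` is white, then `r` is the rank of `n` in `K`. -/
lemma D2R (hk1 : StrictAnti k1) (hK : StrictAnti K) (hwhite : ∀ a, K a ≠ n) {r : ℕ}
    (hr : k1 r = n - 1) (hg : GoodR k1 K r) : rk K n = r := by
  apply rk_eq_of_between hK
  · have h2 := (hg.2 r le_rfl).2
    have h3 : k1 (r + 1) < k1 r := hk1 (by omega)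
    omega
  · rcases Nat.eq_zero_or_pos r with h0 | h0
    · left; exact h0
    · right
      have h1 := (hg.1 (r - 1) (by omega)).1
      have h2 : k1 r < k1 (r - 1) := hk1 (by omega)
      have h3 := hwhite (r - 1)
      omega

lemma B1R (hk1 : StrictAnti k1) (hK : StrictAnti K) (hblack : ∃ b, K b = n) {r : ℕ}
    (hr : k1 r = n) (hg : GoodR k1 K r) :
    k1 (r + 1) = n - 1 ∧ GoodR k1 K (r + 1) := by
  obtain ⟨b, hb⟩ := hblack
  have hKgt : ∀ a, a < r → n < K a := by
    intro a ha
    have h2 := (hg.1 a ha).1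
    have h3 : k1 r < k1 a := hk1 ha
    omega
  have hKle : ∀ a, r ≤ a → K a ≤ n := by
    intro a ha
    have h2 := (hg.2 a ha).2
    have h3 : k1 (a + 1) ≤ k1 (r + 1) := hk1.antitone (by omega)
    have h4 : k1 (r + 1) < k1 r := hk1 (by omega)
    omega
  have hbr : b = r := by
    rcases lt_trichotomy b r with hh | hh | hh
    · have := hKgt b hh; omega
    · exact hh
    · exfalso
      have h5 : K b < K r := hK hh
      have h6 := hKle r le_rfl
      omega
  have hKr : K r = n := by rw [← hbr]; exact hb
  have hk1r1 : k1 (r + 1) = n - 1 := by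
    have h2 := (hg.2 r le_rfl).1
    have h3 := (hg.2 r le_rfl).2
    have h4 : k1 (r + 1) < k1 r := hk1 (by omega)
    omega
  refine ⟨hk1r1, ⟨?_, fun a ha => hg.2 a (by omega)⟩⟩
  intro a ha
  rcases lt_or_eq_of_le (by omega : a ≤ r) with h6 | h6
  · exact hg.1 a h6
  · subst h6
    exact ⟨by omega, by omega⟩

lemma B2R (hk1 : StrictAnti k1) (hK : StrictAnti K) (hblack : ∃ b, K b = n) {r' : ℕ}
    (hr : k1 r' = n - 1) (hg : GoodR k1 K r') :
    0 < r' ∧ k1 (r' - 1) = n ∧ GoodR k1 K (r' - 1) := by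
  obtain ⟨b, hb⟩ := hblack
  have hKle : ∀ a, r' ≤ a → K a < n := by
    intro a ha
    have h2 := (hg.2 a ha).2
    have h3 : k1 (a + 1) ≤ k1 (r' + 1) := hk1.antitone (by omega)
    have h4 : k1 (r' + 1) < k1 r' := hk1 (by omega)
    omega
  have hr'pos : 0 < r' := by
    by_contra hh
    push_neg at hh
    have h2 : r' ≤ b := by omega
    have := hKle b h2
    omega
  have hKgt : ∀ a, a < r' → n - 1 < K a := by
    intro a ha
    have h2 := (hg.1 a ha).1
    have h4 : k1 r' < k1 a := hk1 ha
    omega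
  have hbr : b = r' - 1 := by
    rcases lt_trichotomy b (r' - 1) with hh | hh | hh
    · exfalso
      have h5 : K (r' - 1) < K b := hK hh
      have h6 := hKgt (r' - 1) (by omega)
      omega
    · exact hh
    · exfalso
      have h6 := hKle b (by omega)
      omega
  have hKr : K (r' - 1) = n := by rw [← hbr]; exact hb
  have hk1r : k1 (r' - 1) = n := by
    have h2 := (hg.1 (r' - 1) (by omega)).1
    have h3 := (hg.1 (r' - 1) (by omega)).2
    have h4 : k1 r' < k1 (r' - 1) := hk1 (by omega)
    omega
  refine ⟨hr'pos, hk1r, fun a ha => hg.1 a (by omega), fun a ha => ?_⟩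
  rcases lt_or_eq_of_le ha with h6 | h6
  · exact hg.2 a (by omega)
  · rw [← h6]
    constructor
    · show k1 (r' - 1 + 1) ≤ K (r' - 1)
      rw [(by omega : r' - 1 + 1 = r')]
      omega
    · show K (r' - 1) ≤ k1 (r' - 1 + 1) + 1
      rw [(by omega : r' - 1 + 1 = r')]
      omega

/-- R-case, `n` white in `m` (not in range of `K`). -/
lemma coreR_white (hk1 : StrictAnti k1) (hK : StrictAnti K)
    (htail : ∀ a, i₀ ≤ a → k1 (a + 1) = K a) (hwhite : ∀ a, K a ≠ n) :
    (if (GoodR k1 K (rk K n) ∧ (k1 (rk K n) = n ∨ k1 (rk K n) = n - 1)) ∧ SD k1 K i₀ n = p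
      then ((-1 : ℂ) ^ (rk K n)) else 0)
    = (if (∃ r, k1 r = n ∧ GoodR k1 K r) ∧ SD k1 K i₀ n = p
        then ((-1 : ℂ) ^ (rk k1 n)) else 0)
      + (if ((∃ r, k1 r = n - 1 ∧ GoodR k1 K r) ∧ SD k1 K i₀ n = p) ∧ 1 ≤ p
          then ((-1 : ℂ) ^ (rk k1 (n - 1))) else 0) := by
  by_cases hB : (∃ r, k1 r = n ∧ GoodR k1 K r) ∧ SD k1 K i₀ n = (p : ℤ)
  · -- first RHS term fires
    obtain ⟨⟨r, hr, hg⟩, hSD⟩ := hB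
    have e1 : rk K n = r := D1R hk1 hK hr hg
    have hA : (GoodR k1 K (rk K n) ∧ (k1 (rk K n) = n ∨ k1 (rk K n) = n - 1))
        ∧ SD k1 K i₀ n = (p : ℤ) := by
      rw [e1]
      exact ⟨⟨hg, Or.inl hr⟩, hSD⟩
    have hC : ¬ (((∃ r, k1 r = n - 1 ∧ GoodR k1 K r) ∧ SD k1 K i₀ n = (p : ℤ)) ∧ 1 ≤ p) := by
      rintro ⟨⟨⟨r', hr', hg'⟩, _⟩, _⟩
      have e2 : rk K n = r' := D2R hk1 hK hwhite hr' hg'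
      have e3 : r = r' := e1.symm.trans e2
      rw [← e3] at hr'
      omega
    rw [if_pos hA, if_pos ⟨⟨r, hr, hg⟩, hSD⟩, if_neg hC, e1, rk_eq hk1 hr]
    ring
  · by_cases hC : ((∃ r, k1 r = n - 1 ∧ GoodR k1 K r) ∧ SD k1 K i₀ n = (p : ℤ)) ∧ 1 ≤ p
    · -- second RHS term fires
      obtain ⟨⟨⟨r', hr', hg'⟩, hSD⟩, h1p⟩ := hC
      have e2 : rk K n = r' := D2R hk1 hK hwhite hr' hg'
      have hA : (GoodR k1 K (rk K n) ∧ (k1 (rk K n) = n ∨ k1 (rk K n) = n - 1))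
          ∧ SD k1 K i₀ n = (p : ℤ) := by
        rw [e2]
        exact ⟨⟨hg', Or.inr hr'⟩, hSD⟩
      rw [if_pos hA, if_neg hB, if_pos ⟨⟨⟨r', hr', hg'⟩, hSD⟩, h1p⟩, e2, rk_eq hk1 hr']
      ring
    · -- nothing fires
      have hA : ¬ ((GoodR k1 K (rk K n) ∧ (k1 (rk K n) = n ∨ k1 (rk K n) = n - 1))
          ∧ SD k1 K i₀ n = (p : ℤ)) := by
        rintro ⟨⟨hg, hor⟩, hSD⟩
        rcases hor with hn | hn
        · exact hB ⟨⟨rk K n, hn, hg⟩, hSD⟩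
        · have h1p : 1 ≤ p := by
            have := GoodR.le_SD htail hg n
            omega
          exact hC ⟨⟨⟨rk K n, hn, hg⟩, hSD⟩, h1p⟩
      rw [if_neg hA, if_neg hB, if_neg hC]
      ring

/-- R-case, `n` black in `m`. -/
lemma coreR_black (hk1 : StrictAnti k1) (hK : StrictAnti K)
    (htail : ∀ a, i₀ ≤ a → k1 (a + 1) = K a) (hblack : ∃ b, K b = n) :
    (0 : ℂ)
    = (if (∃ r, k1 r = n ∧ GoodR k1 K r) ∧ SD k1 K i₀ n = p
        then ((-1 : ℂ) ^ (rk k1 n)) else 0)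
      + (if ((∃ r, k1 r = n - 1 ∧ GoodR k1 K r) ∧ SD k1 K i₀ n = p) ∧ 1 ≤ p
          then ((-1 : ℂ) ^ (rk k1 (n - 1))) else 0) := by
  by_cases hB : (∃ r, k1 r = n ∧ GoodR k1 K r) ∧ SD k1 K i₀ n = (p : ℤ)
  · obtain ⟨⟨r, hr, hg⟩, hSD⟩ := hB
    obtain ⟨e1, e2⟩ := B1R hk1 hK hblack hr hg
    have h1p : 1 ≤ p := by
      have := GoodR.le_SD htail e2 n
      omega
    rw [if_pos ⟨⟨r, hr, hg⟩, hSD⟩, if_pos ⟨⟨⟨r + 1, e1, e2⟩, hSD⟩, h1p⟩,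
      rk_eq hk1 hr, rk_eq hk1 e1, pow_succ]
    ring
  · have hC : ¬ (((∃ r, k1 r = n - 1 ∧ GoodR k1 K r) ∧ SD k1 K i₀ n = (p : ℤ)) ∧ 1 ≤ p) := by
      rintro ⟨⟨⟨r', hr', hg'⟩, hSD⟩, _⟩
      obtain ⟨hpos, e1, e2⟩ := B2R hk1 hK hblack hr' hg'
      exact hB ⟨⟨r' - 1, e1, e2⟩, hSD⟩
    rw [if_neg hB, if_neg hC]
    ring

end Core

end S12
namespace S12

section CoreL

variable {k1 K : ℕ → ℤ} {i₀ : ℕ} {n : ℤ} {p : ℕ}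

lemma L_pair (hk1 : StrictAnti k1) {r : ℕ} (hg : GoodL k1 K r) (hup : k1 r ≤ K r) :
    GoodL k1 K (r + 1) := by
  constructor
  · intro a ha
    rcases lt_or_eq_of_le (by omega : a ≤ r) with h1 | h1
    · exact hg.1 a h1
    · subst h1
      refine ⟨hup, ?_⟩
      have h2 := (hg.2 a le_rfl).2
      have h3 : k1 (a + 1) < k1 a := hk1 (by omega)
      omega
  · intro a ha
    exact hg.2 a (by omega)

lemma L_up_of_notgood (hk1 : StrictAnti k1) {r : ℕ} (hg : GoodL k1 K r) (hr : 0 < r)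
    (hng : ¬ GoodL k1 K (r - 1)) : k1 r ≤ K r := by
  by_contra hup
  push_neg at hup
  apply hng
  constructor
  · intro a ha
    exact hg.1 a (by omega)
  · intro a ha
    rcases lt_or_eq_of_le ha with h1 | h1
    · exact hg.2 a (by omega)
    · rw [← h1]
      constructor
      · show k1 (r - 1 + 1) ≤ K (r - 1)
        rw [(by omega : r - 1 + 1 = r)]
        have h2 := (hg.1 (r - 1) (by omega)).1
        have h3 : k1 r < k1 (r - 1) := hk1 (by omega)
        omega
      · show K (r - 1 + 1) < k1 (r - 1 + 1)
        rw [(by omega : r - 1 + 1 = r)]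
        exact hup

lemma coreL_zero (hk1 : StrictAnti k1) (hK : StrictAnti K)
    (htail : ∀ a, i₀ ≤ a → k1 (a + 1) = K a)
    (hρ : SD k1 K i₀ n = (p : ℤ) → GoodL k1 K (rk k1 n) →
      k1 (rk k1 n) ≤ K (rk k1 n)) :
    ∑ j ∈ Finset.range (p + 1),
        (if (∃ r, k1 r = n - (j : ℤ) ∧ GoodL k1 K r) ∧ SD k1 K i₀ n = p
          then ((-1 : ℂ) ^ (rk k1 (n - (j : ℤ)))) else 0) = 0 := by
  by_cases hSD : SD k1 K i₀ n = (p : ℤ)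
  · by_cases hex : ∃ j ∈ Finset.range (p + 1), (∃ r, k1 r = n - (j : ℤ) ∧ GoodL k1 K r)
    · obtain ⟨js, hjs, rs, hrs, hgs⟩ := hex
      have hrsρ : rk k1 n ≤ rs := by
        apply (rk_le_iff hk1 n rs).mpr
        have : (0 : ℤ) ≤ (js : ℤ) := Int.ofNat_nonneg js
        omega
      obtain ⟨r₀, hρr₀, hg0, hg1⟩ :
          ∃ r₀, rk k1 n ≤ r₀ ∧ GoodL k1 K r₀ ∧ GoodL k1 K (r₀ + 1) := by
        rcases eq_or_lt_of_le hrsρ with he | hlt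
        · refine ⟨rs, hrsρ, hgs, L_pair hk1 hgs ?_⟩
          rw [← he]
          exact hρ hSD (by rw [he]; exact hgs)
        · by_cases hgm : GoodL k1 K (rs - 1)
          · refine ⟨rs - 1, by omega, hgm, ?_⟩
            rw [(by omega : rs - 1 + 1 = rs)]
            exact hgs
          · exact ⟨rs, by omega, hgs, L_pair hk1 hgs (L_up_of_notgood hk1 hgs (by omega) hgm)⟩
      have hle0 : k1 r₀ ≤ n := (rk_le_iff hk1 n r₀).mp hρr₀
      have hle1 : k1 (r₀ + 1) ≤ n := (rk_le_iff hk1 n (r₀ + 1)).mp (by omega)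
      have c₁ : ((n - k1 r₀).toNat : ℤ) = n - k1 r₀ := Int.toNat_of_nonneg (by omega)
      have c₂ : ((n - k1 (r₀ + 1)).toNat : ℤ) = n - k1 (r₀ + 1) := Int.toNat_of_nonneg (by omega)
      have hj₁p : (n - k1 r₀).toNat ≤ p := by
        have := GoodL.le_SD htail hg0 n
        omega
      have hj₂p : (n - k1 (r₀ + 1)).toNat ≤ p := by
        have := GoodL.le_SD htail hg1 n
        omega
      have hne : (n - k1 r₀).toNat ≠ (n - k1 (r₀ + 1)).toNat := by
        have : k1 (r₀ + 1) < k1 r₀ := hk1 (by omega)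
        omega
      have hsub : ({(n - k1 r₀).toNat, (n - k1 (r₀ + 1)).toNat} : Finset ℕ)
          ⊆ Finset.range (p + 1) := by
        intro x hx
        simp only [Finset.mem_insert, Finset.mem_singleton] at hx
        rcases hx with rfl | rfl <;> simp only [Finset.mem_range] <;> omega
      have hzero : ∀ x ∈ Finset.range (p + 1),
          x ∉ ({(n - k1 r₀).toNat, (n - k1 (r₀ + 1)).toNat} : Finset ℕ) →
          (if (∃ r, k1 r = n - (x : ℤ) ∧ GoodL k1 K r) ∧ SD k1 K i₀ n = p
            then ((-1 : ℂ) ^ (rk k1 (n - (x : ℤ)))) else 0) = 0 := by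
        intro x _ hnx
        apply if_neg
        rintro ⟨⟨r, hr, hg⟩, _⟩
        simp only [Finset.mem_insert, Finset.mem_singleton] at hnx
        push_neg at hnx
        have hrin : r = r₀ ∨ r = r₀ + 1 := by
          rcases lt_trichotomy r r₀ with hh | hh | hh
          · exfalso
            have hd1 := GoodL.dist hg hg0 hh
            have hd2 := GoodL.dist hg hg1 (by omega)
            omega
          · exact Or.inl hh
          · rcases lt_or_eq_of_le (by omega : r₀ + 1 ≤ r) with hh2 | hh2
            · exfalso
              have hd1 := GoodL.dist hg1 hg hh2
              have hd2 := GoodL.dist hg0 hg (by omega)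
              omega
            · exact Or.inr hh2.symm
        rcases hrin with rfl | rfl
        · exact hnx.1 (by omega)
        · exact hnx.2 (by omega)
      rw [← Finset.sum_subset hsub hzero, Finset.sum_pair hne]
      have hv₁ : (if (∃ r, k1 r = n - ((n - k1 r₀).toNat : ℤ) ∧ GoodL k1 K r)
            ∧ SD k1 K i₀ n = p
          then ((-1 : ℂ) ^ (rk k1 (n - ((n - k1 r₀).toNat : ℤ)))) else 0)
          = (-1 : ℂ) ^ r₀ := by
        have he : n - ((n - k1 r₀).toNat : ℤ) = k1 r₀ := by omega
        rw [he, if_pos ⟨⟨r₀, rfl, hg0⟩, hSD⟩, rk_eq hk1 rfl]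
      have hv₂ : (if (∃ r, k1 r = n - ((n - k1 (r₀ + 1)).toNat : ℤ) ∧ GoodL k1 K r)
            ∧ SD k1 K i₀ n = p
          then ((-1 : ℂ) ^ (rk k1 (n - ((n - k1 (r₀ + 1)).toNat : ℤ)))) else 0)
          = (-1 : ℂ) ^ (r₀ + 1) := by
        have he : n - ((n - k1 (r₀ + 1)).toNat : ℤ) = k1 (r₀ + 1) := by omega
        rw [he, if_pos ⟨⟨r₀ + 1, rfl, hg1⟩, hSD⟩, rk_eq hk1 rfl]
      rw [hv₁, hv₂, pow_succ]
      ring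
    · apply Finset.sum_eq_zero
      intro j hj
      apply if_neg
      rintro ⟨hex_j, _⟩
      exact hex ⟨j, hj, hex_j⟩
  · apply Finset.sum_eq_zero
    intro j _
    exact if_neg (fun h => hSD h.2)

lemma coreL_white (hk1 : StrictAnti k1) (hK : StrictAnti K)
    (htail : ∀ a, i₀ ≤ a → k1 (a + 1) = K a) (hwhite : ∀ a, K a ≠ n) :
    (if (GoodL k1 K (rk k1 n) ∧ K (rk k1 n) < k1 (rk k1 n)) ∧ SD k1 K i₀ n = p
      then ((-1 : ℂ) ^ (rk k1 n)) else 0)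
    = ∑ j ∈ Finset.range (p + 1),
        (if (∃ r, k1 r = n - (j : ℤ) ∧ GoodL k1 K r) ∧ SD k1 K i₀ n = p
          then ((-1 : ℂ) ^ (rk k1 (n - (j : ℤ)))) else 0) := by
  by_cases hA : (GoodL k1 K (rk k1 n) ∧ K (rk k1 n) < k1 (rk k1 n)) ∧ SD k1 K i₀ n = (p : ℤ)
  · obtain ⟨⟨hg, hlt⟩, hSD⟩ := hA
    rw [if_pos ⟨⟨hg, hlt⟩, hSD⟩]
    have hk1ρ : k1 (rk k1 n) ≤ n := (rk_le_iff hk1 n _).mp le_rfl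
    have c₀ : ((n - k1 (rk k1 n)).toNat : ℤ) = n - k1 (rk k1 n) :=
      Int.toNat_of_nonneg (by omega)
    have hj₀p : (n - k1 (rk k1 n)).toNat ≤ p := by
      have := GoodL.le_SD htail hg n
      omega
    have hothers : ∀ j ∈ Finset.range (p + 1), j ≠ (n - k1 (rk k1 n)).toNat →
        (if (∃ r, k1 r = n - (j : ℤ) ∧ GoodL k1 K r) ∧ SD k1 K i₀ n = p
          then ((-1 : ℂ) ^ (rk k1 (n - (j : ℤ)))) else 0) = 0 := by
      intro j hj hjne
      apply if_neg
      rintro ⟨⟨r, hr, hg'⟩, _⟩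
      have hρr : rk k1 n ≤ r := by
        apply (rk_le_iff hk1 n r).mpr
        have : (0 : ℤ) ≤ (j : ℤ) := Int.ofNat_nonneg j
        omega
      have hreq : r = rk k1 n := by
        rcases lt_or_eq_of_le hρr with hh | hh
        · exfalso
          have hd := GoodL.dist hg hg' hh
          have hP := (hg'.1 (rk k1 n) (by omega)).1
          omega
        · exact hh.symm
      apply hjne
      rw [hreq] at hr
      omega
    have hsum := Finset.sum_eq_single_of_mem ((n - k1 (rk k1 n)).toNat)
      (Finset.mem_range.mpr (show (n - k1 (rk k1 n)).toNat < p + 1 by omega)) hothers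
    rw [hsum]
    have he : n - ((n - k1 (rk k1 n)).toNat : ℤ) = k1 (rk k1 n) := by omega
    rw [he, if_pos ⟨⟨rk k1 n, rfl, hg⟩, hSD⟩, rk_eq hk1 rfl]
  · rw [if_neg hA]
    symm
    apply coreL_zero hk1 hK htail
    intro hSD hgρ
    by_contra hup
    push_neg at hup
    exact hA ⟨⟨hgρ, hup⟩, hSD⟩

lemma coreL_black (hk1 : StrictAnti k1) (hK : StrictAnti K)
    (htail : ∀ a, i₀ ≤ a → k1 (a + 1) = K a) (hblack : ∃ b, K b = n) :
    (0 : ℂ)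
    = ∑ j ∈ Finset.range (p + 1),
        (if (∃ r, k1 r = n - (j : ℤ) ∧ GoodL k1 K r) ∧ SD k1 K i₀ n = p
          then ((-1 : ℂ) ^ (rk k1 (n - (j : ℤ)))) else 0) := by
  symm
  apply coreL_zero hk1 hK htail
  intro _ hgρ
  by_contra hup
  push_neg at hup
  obtain ⟨b, hb⟩ := hblack
  have hk1ρ : k1 (rk k1 n) ≤ n := (rk_le_iff hk1 n _).mp le_rfl
  rcases lt_or_ge b (rk k1 n) with hh | hh
  · have h1 := (hgρ.1 b hh).1
    have h2 : n < k1 b := (lt_rk_iff hk1 n b).mp hh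
    omega
  · have h1 : K b ≤ K (rk k1 n) := hK.antitone hh
    omega

end CoreL

end S12
namespace S12

lemma rk_mono {k : ℕ → ℤ} (hk : StrictAnti k) {t t' : ℤ} (h : t ≤ t') :
    rk k t' ≤ rk k t :=
  (rk_le_iff hk t' _).mpr (le_trans ((rk_le_iff hk t _).mp le_rfl) h)

/-- the R-identity -/
lemma partR (n : ℤ) (m m' : Maya) (p : ℕ) :
    (if m.f n = false then
        (-1 : ℂ) ^ nAbove m n * (if MayaPrec false m' (m.flip n) p then 1 else 0)
      else 0) =
    (if m'.f n = true then
        (-1 : ℂ) ^ nAbove m' n * (if MayaPrec false (m'.flip n) m p then 1 else 0)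
      else 0) +
    (if 1 ≤ p ∧ m'.f (n - 1) = true then
        (-1 : ℂ) ^ nAbove m' (n - 1) *
          (if MayaPrec false (m'.flip (n - 1)) m (p - 1) then 1 else 0)
      else 0) := by
  classical
  obtain ⟨k1, hk1⟩ : ∃ k, IsEnum m' k := ⟨enum m', isEnum_enum m'⟩
  obtain ⟨K, hK⟩ : ∃ k, IsEnum m k := ⟨enum m, isEnum_enum m⟩
  by_cases hch : m'.charge = m.charge + 1
  · obtain ⟨N1, hN1⟩ := hk1.tail
    obtain ⟨N2, hN2⟩ := hK.tail
    have htail : ∀ a, max N1 N2 ≤ a → k1 (a + 1) = K a := by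
      intro a ha
      have e1 := hN1 (a + 1) (by omega)
      have e2 := hN2 a (by omega)
      push_cast at e1
      omega
    set i₀ := max N1 N2 with hi₀def
    set N := i₀ + rk K n + rk k1 n + rk k1 (n - 1) + 2 with hNdef
    have hNi₀ : i₀ + 1 ≤ N := by omega
    have hN1' : ∀ i, N ≤ i → k1 i = m'.charge - i - 1 := fun i hi => hN1 i (by omega)
    have hNK : ∀ i, N ≤ i → K i = m.charge - i - 1 := fun i hi => hN2 i (by omega)
    have hcf' : ∀ t, m'.f t = true → (m'.flip t).charge = m.charge := by
      intro t ht
      rw [charge_flip m' t, if_pos ht]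
      omega
    -- first RHS term
    have eR1 : (if m'.f n = true then
          (-1 : ℂ) ^ nAbove m' n * (if MayaPrec false (m'.flip n) m p then 1 else 0)
        else 0)
        = (if (∃ r, k1 r = n ∧ GoodR k1 K r) ∧ SD k1 K i₀ n = (p : ℤ)
            then ((-1 : ℂ) ^ (rk k1 n)) else 0) := by
      by_cases hb : m'.f n = true
      · obtain ⟨r, hr⟩ := (hk1.2 n).mp hb
        have hrrk : rk k1 n = r := rk_eq hk1.1 hr
        have hrlt : r < N := by omega
        have hNl' : ∀ i, N ≤ i → delS k1 r i = (m'.flip n).charge - i - 1 := by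
          intro i hi
          rw [delS_ge (by omega : r ≤ i), hN1 (i + 1) (by omega), hcf' n hb]
          push_cast
          omega
        have hd : IsEnum (m'.flip n) (delS k1 r) := by
          rw [← hr]
          exact hk1.del r
        have hiff1 : MayaPrec false (m'.flip n) m p ↔
            (GoodR k1 K r ∧ SD k1 K i₀ n = (p : ℤ)) := by
          have h1 := mayaPrecR_iff hd hK (by rw [hcf' n hb]) hNl' hNK p
          rw [bridge_delR, sum_del htail n r N (by omega) (by omega)] at h1
          rw [h1, hr]
          constructor
          · rintro ⟨hg, hs⟩
            exact ⟨hg, by omega⟩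
          · rintro ⟨hg, hs⟩
            exact ⟨hg, by omega⟩
        rw [if_pos hb, hk1.nAbove_eq_rk n]
        by_cases hQ : MayaPrec false (m'.flip n) m p
        · rw [if_pos hQ, mul_one, if_pos ⟨⟨r, hr, (hiff1.mp hQ).1⟩, (hiff1.mp hQ).2⟩]
        · rw [if_neg hQ, mul_zero, if_neg]
          rintro ⟨⟨r', hr', hg'⟩, hSD⟩
          have hrr : r' = r := hk1.1.injective (by rw [hr', hr])
          exact hQ (hiff1.mpr ⟨hrr ▸ hg', hSD⟩)
      · rw [if_neg hb, if_neg]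
        rintro ⟨⟨r', hr', _⟩, _⟩
        exact hb ((hk1.2 n).mpr ⟨r', hr'⟩)
    -- second RHS term
    have eR2 : (if 1 ≤ p ∧ m'.f (n - 1) = true then
          (-1 : ℂ) ^ nAbove m' (n - 1) *
            (if MayaPrec false (m'.flip (n - 1)) m (p - 1) then 1 else 0)
        else 0)
        = (if ((∃ r, k1 r = n - 1 ∧ GoodR k1 K r) ∧ SD k1 K i₀ n = (p : ℤ)) ∧ 1 ≤ p
            then ((-1 : ℂ) ^ (rk k1 (n - 1))) else 0) := by
      by_cases hb : 1 ≤ p ∧ m'.f (n - 1) = true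
      · obtain ⟨hp1, hb2⟩ := hb
        obtain ⟨r, hr⟩ := (hk1.2 (n - 1)).mp hb2
        have hrrk : rk k1 (n - 1) = r := rk_eq hk1.1 hr
        have hrlt : r < N := by omega
        have hNl' : ∀ i, N ≤ i → delS k1 r i = (m'.flip (n - 1)).charge - i - 1 := by
          intro i hi
          rw [delS_ge (by omega : r ≤ i), hN1 (i + 1) (by omega), hcf' (n - 1) hb2]
          push_cast
          omega
        have hd : IsEnum (m'.flip (n - 1)) (delS k1 r) := by
          rw [← hr]
          exact hk1.del r
        have hiff2 : MayaPrec false (m'.flip (n - 1)) m (p - 1) ↔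
            (GoodR k1 K r ∧ SD k1 K i₀ n = (p : ℤ)) := by
          have h1 := mayaPrecR_iff hd hK (by rw [hcf' (n - 1) hb2]) hNl' hNK (p - 1)
          rw [bridge_delR, sum_del htail n r N (by omega) (by omega)] at h1
          rw [h1, hr]
          have hcast : ((p - 1 : ℕ) : ℤ) = (p : ℤ) - 1 := by omega
          rw [hcast]
          constructor
          · rintro ⟨hg, hs⟩
            exact ⟨hg, by omega⟩
          · rintro ⟨hg, hs⟩
            exact ⟨hg, by omega⟩
        rw [if_pos ⟨hp1, hb2⟩, hk1.nAbove_eq_rk (n - 1)]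
        by_cases hQ : MayaPrec false (m'.flip (n - 1)) m (p - 1)
        · rw [if_pos hQ, mul_one,
            if_pos ⟨⟨⟨r, hr, (hiff2.mp hQ).1⟩, (hiff2.mp hQ).2⟩, hp1⟩]
        · rw [if_neg hQ, mul_zero, if_neg]
          rintro ⟨⟨⟨r', hr', hg'⟩, hSD⟩, _⟩
          have hrr : r' = r := hk1.1.injective (by rw [hr', hr])
          exact hQ (hiff2.mpr ⟨hrr ▸ hg', hSD⟩)
      · rw [if_neg hb, if_neg]
        rintro ⟨⟨⟨r', hr', hg'⟩, hSD⟩, hp1⟩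
        exact hb ⟨hp1, (hk1.2 (n - 1)).mpr ⟨r', hr'⟩⟩
    rw [eR1, eR2]
    by_cases hmn : m.f n = false
    · have hwhite : ∀ a, K a ≠ n := by
        intro a ha
        have hb := hK.black a
        rw [ha] at hb
        rw [hb] at hmn
        exact absurd hmn (by simp)
      have hcf : (m.flip n).charge = m.charge + 1 := by
        rw [charge_flip m n, if_neg (by simp [hmn])]
      have hchf : m'.charge = (m.flip n).charge := by rw [hcf]; exact hch
      have hNh : ∀ i, N ≤ i → insS K (rk K n) n i = (m.flip n).charge - i - 1 := by
        intro i hi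
        rw [insS_gt (by omega : rk K n < i), hN2 (i - 1) (by omega), hcf]
        push_cast
        omega
      have hiffL : MayaPrec false m' (m.flip n) p ↔
          ((GoodR k1 K (rk K n) ∧ (k1 (rk K n) = n ∨ k1 (rk K n) = n - 1))
            ∧ SD k1 K i₀ n = (p : ℤ)) := by
        rw [mayaPrecR_iff hk1 (hK.ins hmn) hchf hN1' hNh p, bridge_insR,
          sum_ins htail n (rk K n) N (by omega) hNi₀]
      have eL : (if m.f n = false then
            (-1 : ℂ) ^ nAbove m n * (if MayaPrec false m' (m.flip n) p then 1 else 0)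
          else 0)
          = (if (GoodR k1 K (rk K n) ∧ (k1 (rk K n) = n ∨ k1 (rk K n) = n - 1))
              ∧ SD k1 K i₀ n = (p : ℤ) then ((-1 : ℂ) ^ (rk K n)) else 0) := by
        rw [if_pos hmn, hK.nAbove_eq_rk n]
        by_cases hQ : MayaPrec false m' (m.flip n) p
        · rw [if_pos hQ, if_pos (hiffL.mp hQ), mul_one]
        · rw [if_neg hQ, if_neg (fun hh => hQ (hiffL.mpr hh)), mul_zero]
      rw [eL]
      exact coreR_white hk1.1 hK.1 htail hwhite
    · have hmt : m.f n = true := by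
        cases h : m.f n
        · exact absurd h hmn
        · rfl
      rw [if_neg (by simp [hmt])]
      exact coreR_black hk1.1 hK.1 htail ((hK.2 n).mp hmt)
  · -- charges incompatible : everything vanishes
    have z1 : (if m.f n = false then
          (-1 : ℂ) ^ nAbove m n * (if MayaPrec false m' (m.flip n) p then 1 else 0)
        else 0) = 0 := by
      by_cases hmn : m.f n = false
      · rw [if_pos hmn]
        have hnot : ¬ MayaPrec false m' (m.flip n) p := by
          intro hQ
          have h1 := mayaPrec_charge hQ
          rw [charge_flip m n, if_neg (by simp [hmn])] at h1
          exact hch h1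
        rw [if_neg hnot, mul_zero]
      · rw [if_neg hmn]
    have z2 : (if m'.f n = true then
          (-1 : ℂ) ^ nAbove m' n * (if MayaPrec false (m'.flip n) m p then 1 else 0)
        else 0) = 0 := by
      by_cases hb : m'.f n = true
      · rw [if_pos hb]
        have hnot : ¬ MayaPrec false (m'.flip n) m p := by
          intro hQ
          have h1 := mayaPrec_charge hQ
          rw [charge_flip m' n, if_pos hb] at h1
          exact hch (by omega)
        rw [if_neg hnot, mul_zero]
      · rw [if_neg hb]
    have z3 : (if 1 ≤ p ∧ m'.f (n - 1) = true then
          (-1 : ℂ) ^ nAbove m' (n - 1) *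
            (if MayaPrec false (m'.flip (n - 1)) m (p - 1) then 1 else 0)
        else 0) = 0 := by
      by_cases hb : 1 ≤ p ∧ m'.f (n - 1) = true
      · rw [if_pos hb]
        have hnot : ¬ MayaPrec false (m'.flip (n - 1)) m (p - 1) := by
          intro hQ
          have h1 := mayaPrec_charge hQ
          rw [charge_flip m' (n - 1), if_pos hb.2] at h1
          exact hch (by omega)
        rw [if_neg hnot, mul_zero]
      · rw [if_neg hb]
    rw [z1, z2, z3]
    ring

end S12
namespace S12

lemma L_rkK {k1 K : ℕ → ℤ} {n : ℤ} (hk1 : StrictAnti k1) (hK : StrictAnti K)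
    (hg : GoodL k1 K (rk k1 n)) (hlt : K (rk k1 n) < k1 (rk k1 n)) :
    rk K n = rk k1 n := by
  have hk1ρ : k1 (rk k1 n) ≤ n := (rk_le_iff hk1 n _).mp le_rfl
  apply rk_eq_of_between hK (by omega)
  rcases Nat.eq_zero_or_pos (rk k1 n) with h0 | h0
  · left; exact h0
  · right
    have h1 := (hg.1 (rk k1 n - 1) (by omega)).1
    have h2 : n < k1 (rk k1 n - 1) := (lt_rk_iff hk1 n _).mp (by omega)
    omega

/-- the L-identity -/
lemma partL (n : ℤ) (m m' : Maya) (p : ℕ) :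
    (if m.f n = false then
        (-1 : ℂ) ^ nAbove m n * (if MayaPrec true m' (m.flip n) p then 1 else 0)
      else 0) =
    ∑ j ∈ Finset.range (p + 1),
      if m'.f (n - (j : ℤ)) = true then
        (-1 : ℂ) ^ nAbove m' (n - (j : ℤ)) *
          (if MayaPrec true (m'.flip (n - (j : ℤ))) m (p - j) then 1 else 0)
      else 0 := by
  classical
  obtain ⟨k1, hk1⟩ : ∃ k, IsEnum m' k := ⟨enum m', isEnum_enum m'⟩
  obtain ⟨K, hK⟩ : ∃ k, IsEnum m k := ⟨enum m, isEnum_enum m⟩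
  by_cases hch : m'.charge = m.charge + 1
  · obtain ⟨N1, hN1⟩ := hk1.tail
    obtain ⟨N2, hN2⟩ := hK.tail
    have htail : ∀ a, max N1 N2 ≤ a → k1 (a + 1) = K a := by
      intro a ha
      have e1 := hN1 (a + 1) (by omega)
      have e2 := hN2 a (by omega)
      push_cast at e1
      omega
    set i₀ := max N1 N2 with hi₀def
    set N := i₀ + rk K n + rk k1 (n - (p : ℤ)) + 2 with hNdef
    have hNi₀ : i₀ + 1 ≤ N := by omega
    have hN1' : ∀ i, N ≤ i → k1 i = m'.charge - i - 1 := fun i hi => hN1 i (by omega)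
    have hNK : ∀ i, N ≤ i → K i = m.charge - i - 1 := fun i hi => hN2 i (by omega)
    have hcf' : ∀ t, m'.f t = true → (m'.flip t).charge = m.charge := by
      intro t ht
      rw [charge_flip m' t, if_pos ht]
      omega
    have eT : ∀ j ∈ Finset.range (p + 1),
        (if m'.f (n - (j : ℤ)) = true then
          (-1 : ℂ) ^ nAbove m' (n - (j : ℤ)) *
            (if MayaPrec true (m'.flip (n - (j : ℤ))) m (p - j) then 1 else 0)
        else 0)
        = (if (∃ r, k1 r = n - (j : ℤ) ∧ GoodL k1 K r) ∧ SD k1 K i₀ n = (p : ℤ)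
            then ((-1 : ℂ) ^ (rk k1 (n - (j : ℤ)))) else 0) := by
      intro j hj
      have hjp : j ≤ p := by
        have := Finset.mem_range.mp hj
        omega
      have hjpz : (j : ℤ) ≤ (p : ℤ) := by exact_mod_cast hjp
      by_cases hb : m'.f (n - (j : ℤ)) = true
      · obtain ⟨r, hr⟩ := (hk1.2 _).mp hb
        have hrrk : rk k1 (n - (j : ℤ)) = r := rk_eq hk1.1 hr
        have hrle : r ≤ rk k1 (n - (p : ℤ)) := by
          rw [← hrrk]
          exact rk_mono hk1.1 (by omega)
        have hrlt : r < N := by omega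
        have hNl' : ∀ i, N ≤ i → delS k1 r i = (m'.flip (n - (j : ℤ))).charge - i - 1 := by
          intro i hi
          rw [delS_ge (by omega : r ≤ i), hN1 (i + 1) (by omega), hcf' _ hb]
          push_cast
          omega
        have hd : IsEnum (m'.flip (n - (j : ℤ))) (delS k1 r) := by
          rw [← hr]
          exact hk1.del r
        have hiff : MayaPrec true (m'.flip (n - (j : ℤ))) m (p - j) ↔
            (GoodL k1 K r ∧ SD k1 K i₀ n = (p : ℤ)) := by
          have h1 := mayaPrecL_iff hd hK (by rw [hcf' _ hb]) hNl' hNK (p - j)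
          rw [bridge_delL, sum_del htail n r N (by omega) (by omega)] at h1
          rw [h1, hr]
          have hcast : ((p - j : ℕ) : ℤ) = (p : ℤ) - j := by omega
          rw [hcast]
          constructor
          · rintro ⟨hg, hs⟩
            exact ⟨hg, by omega⟩
          · rintro ⟨hg, hs⟩
            exact ⟨hg, by omega⟩
        rw [if_pos hb, hk1.nAbove_eq_rk]
        by_cases hQ : MayaPrec true (m'.flip (n - (j : ℤ))) m (p - j)
        · rw [if_pos hQ, mul_one, if_pos ⟨⟨r, hr, (hiff.mp hQ).1⟩, (hiff.mp hQ).2⟩]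
        · rw [if_neg hQ, mul_zero, if_neg]
          rintro ⟨⟨r', hr', hg'⟩, hSD⟩
          have hrr : r' = r := hk1.1.injective (by rw [hr', hr])
          exact hQ (hiff.mpr ⟨hrr ▸ hg', hSD⟩)
      · rw [if_neg hb, if_neg]
        rintro ⟨⟨r', hr', _⟩, _⟩
        exact hb ((hk1.2 _).mpr ⟨r', hr'⟩)
    rw [Finset.sum_congr rfl eT]
    by_cases hmn : m.f n = false
    · have hwhite : ∀ a, K a ≠ n := by
        intro a ha
        have hb := hK.black a
        rw [ha] at hb
        rw [hb] at hmn
        exact absurd hmn (by simp)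
      have hcf : (m.flip n).charge = m.charge + 1 := by
        rw [charge_flip m n, if_neg (by simp [hmn])]
      have hchf : m'.charge = (m.flip n).charge := by rw [hcf]; exact hch
      have hNh : ∀ i, N ≤ i → insS K (rk K n) n i = (m.flip n).charge - i - 1 := by
        intro i hi
        rw [insS_gt (by omega : rk K n < i), hN2 (i - 1) (by omega), hcf]
        push_cast
        omega
      have hiffL : MayaPrec true m' (m.flip n) p ↔
          ((GoodL k1 K (rk k1 n) ∧ K (rk k1 n) < k1 (rk k1 n))
            ∧ SD k1 K i₀ n = (p : ℤ)) := by
        rw [mayaPrecL_iff hk1 (hK.ins hmn) hchf hN1' hNh p,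
          bridge_insL hk1.1 hK.1 hwhite,
          sum_ins htail n (rk K n) N (by omega) hNi₀]
      have eL : (if m.f n = false then
            (-1 : ℂ) ^ nAbove m n * (if MayaPrec true m' (m.flip n) p then 1 else 0)
          else 0)
          = (if (GoodL k1 K (rk k1 n) ∧ K (rk k1 n) < k1 (rk k1 n))
              ∧ SD k1 K i₀ n = (p : ℤ) then ((-1 : ℂ) ^ (rk k1 n)) else 0) := by
        rw [if_pos hmn, hK.nAbove_eq_rk n]
        by_cases hQ : MayaPrec true m' (m.flip n) p
        · have hc := hiffL.mp hQ
          rw [if_pos hQ, if_pos hc, mul_one, L_rkK hk1.1 hK.1 hc.1.1 hc.1.2]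
        · rw [if_neg hQ, if_neg (fun hh => hQ (hiffL.mpr hh)), mul_zero]
      rw [eL]
      exact coreL_white hk1.1 hK.1 htail hwhite
    · have hmt : m.f n = true := by
        cases h : m.f n
        · exact absurd h hmn
        · rfl
      rw [if_neg (by simp [hmt])]
      exact coreL_black hk1.1 hK.1 htail ((hK.2 n).mp hmt)
  · have z1 : (if m.f n = false then
          (-1 : ℂ) ^ nAbove m n * (if MayaPrec true m' (m.flip n) p then 1 else 0)
        else 0) = 0 := by
      by_cases hmn : m.f n = false
      · rw [if_pos hmn]
        have hnot : ¬ MayaPrec true m' (m.flip n) p := by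
          intro hQ
          have h1 := mayaPrec_charge hQ
          rw [charge_flip m n, if_neg (by simp [hmn])] at h1
          exact hch h1
        rw [if_neg hnot, mul_zero]
      · rw [if_neg hmn]
    rw [z1]
    symm
    apply Finset.sum_eq_zero
    intro j _
    by_cases hb : m'.f (n - (j : ℤ)) = true
    · rw [if_pos hb]
      have hnot : ¬ MayaPrec true (m'.flip (n - (j : ℤ))) m (p - j) := by
        intro hQ
        have h1 := mayaPrec_charge hQ
        rw [charge_flip m' (n - (j : ℤ)), if_pos hb] at h1
        exact hch (by omega)
      rw [if_neg hnot, mul_zero]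
    · rw [if_neg hb]

end S12

/-- the quasi-commutations `Γ_{R+}(x) ψ(z) = (1+xz) ψ(z) Γ_{R+}(x)` and
`Γ_{L+}(x) ψ(z) = (1-xz)⁻¹ ψ(z) Γ_{L+}(x)`, as coefficient-extraction identities: writing
`Γ_{a+}(x) = Σ_p x^p Γ_{a+,p}` with `⟨m'|Γ_{a+,p}|m⟩ = [MayaPrec a m' m p]`, and extracting
the coefficient of each `z^k x^p`, they read `Γ_{R+}ψ_k = ψ_k Γ_{R+} + x ψ_{k-1} Γ_{R+}` and
`Γ_{L+}ψ_k = Σ_{j ≥ 0} x^j ψ_{k-j} Γ_{L+}` (a locally finite sum).  Both sides are written as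
matrix elements `⟨m'|·|m⟩` at degree `p` (the index `n : ℤ` encodes the position `n + 1/2`). -/
theorem stmt12 :
    (∀ (n : ℤ) (m m' : Maya) (p : ℕ),
      (if m.f n = false then
          (-1 : ℂ) ^ nAbove m n * (if MayaPrec false m' (m.flip n) p then 1 else 0)
        else 0) =
      (if m'.f n = true then
          (-1 : ℂ) ^ nAbove m' n * (if MayaPrec false (m'.flip n) m p then 1 else 0)
        else 0) +
      (if 1 ≤ p ∧ m'.f (n - 1) = true then
          (-1 : ℂ) ^ nAbove m' (n - 1) * (if MayaPrec false (m'.flip (n - 1)) m (p - 1) then 1 else 0)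
        else 0)) ∧
    (∀ (n : ℤ) (m m' : Maya) (p : ℕ),
      (if m.f n = false then
          (-1 : ℂ) ^ nAbove m n * (if MayaPrec true m' (m.flip n) p then 1 else 0)
        else 0) =
      ∑ j ∈ Finset.range (p + 1),
        if m'.f (n - (j : ℤ)) = true then
          (-1 : ℂ) ^ nAbove m' (n - (j : ℤ)) *
            (if MayaPrec true (m'.flip (n - (j : ℤ))) m (p - j) then 1 else 0)
        else 0) :=
  ⟨S12.partR, S12.partL⟩
end

section
/- If a 2s×2s antisymmetric matrix A has A_{ij} = 0 whenever i and j have the same parity, then its Pfaffian equals the determinant of the s×s matrix B with B_{tu} = A_{2t-1, 2u}: Pf(A) = det(B). -/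
open scoped Classical
open Matrix

open scoped Classical in
/-- Perfect pairings of `{0, …, 2s-1}` in canonical form, viewed as permutations `σ`
with `σ(2t) < σ(2t+1)` for all `t` and `σ(0) < σ(2) < ⋯ < σ(2s-2)`. -/
noncomputable def pairings (s : ℕ) : Finset (Equiv.Perm (Fin (2 * s))) :=
  Finset.univ.filter fun σ =>
    (∀ t : Fin s, σ ⟨2 * t.1, by have := t.2; omega⟩ < σ ⟨2 * t.1 + 1, by have := t.2; omega⟩) ∧
      ∀ t u : Fin s, t < u →
        σ ⟨2 * t.1, by have := t.2; omega⟩ < σ ⟨2 * u.1, by have := u.2; omega⟩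

/-- The Pfaffian of a `2s × 2s` matrix, as the sum over perfect pairings. -/
noncomputable def pf {R : Type*} [CommRing R] (s : ℕ)
    (A : Matrix (Fin (2 * s)) (Fin (2 * s)) R) : R :=
  ∑ σ ∈ pairings s, (((Equiv.Perm.sign σ : ℤˣ) : ℤ) : R) *
    ∏ t : Fin s, A (σ ⟨2 * t.1, by have := t.2; omega⟩) (σ ⟨2 * t.1 + 1, by have := t.2; omega⟩)

namespace Stmt16

variable {s : ℕ}

def em (t : Fin s) : Fin (2 * s) := ⟨2 * t.1, by have := t.2; omega⟩
def om (t : Fin s) : Fin (2 * s) := ⟨2 * t.1 + 1, by have := t.2; omega⟩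
def hl (x : Fin (2 * s)) : Fin s := ⟨x.1 / 2, by have := x.2; omega⟩

@[simp] lemma em_val (t : Fin s) : (em t).1 = 2 * t.1 := rfl
@[simp] lemma om_val (t : Fin s) : (om t).1 = 2 * t.1 + 1 := rfl
@[simp] lemma hl_val (x : Fin (2 * s)) : (hl x).1 = x.1 / 2 := rfl

lemma em_injective : Function.Injective (em (s := s)) := by
  intro a b h
  rw [Fin.ext_iff] at h ⊢
  simp only [em_val] at h
  omega

lemma om_injective : Function.Injective (om (s := s)) := by
  intro a b h
  rw [Fin.ext_iff] at h ⊢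
  simp only [om_val] at h
  omega

@[simp] lemma hl_em (t : Fin s) : hl (em t) = t := by
  apply Fin.ext; simp only [hl_val, em_val]; omega
@[simp] lemma hl_om (t : Fin s) : hl (om t) = t := by
  apply Fin.ext; simp only [hl_val, om_val]; omega

lemma em_hl {x : Fin (2 * s)} (h : x.1 % 2 = 0) : em (hl x) = x := by
  apply Fin.ext; simp only [hl_val, em_val]; omega

lemma om_hl {x : Fin (2 * s)} (h : x.1 % 2 = 1) : om (hl x) = x := by
  apply Fin.ext; simp only [hl_val, om_val]; omega

lemma em_or_om (x : Fin (2 * s)) : x = em (hl x) ∨ x = om (hl x) := by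
  rcases Nat.mod_two_eq_zero_or_one x.1 with h | h
  · exact Or.inl (em_hl h).symm
  · exact Or.inr (om_hl h).symm

def flipFun (x : Fin (2 * s)) : Fin (2 * s) :=
  if h : x.1 % 2 = 0 then ⟨x.1 + 1, by have := x.2; omega⟩
  else ⟨x.1 - 1, by have := x.2; omega⟩

lemma flipFun_val (x : Fin (2 * s)) :
    (flipFun x).1 = if x.1 % 2 = 0 then x.1 + 1 else x.1 - 1 := by
  rw [flipFun]; split_ifs <;> rfl

lemma flipFun_involutive : Function.Involutive (flipFun (s := s)) := by
  intro x
  apply Fin.ext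
  rw [flipFun_val, flipFun_val]
  split_ifs <;> omega

def flipE : Equiv.Perm (Fin (2 * s)) := flipFun_involutive.toPerm

lemma flipE_apply (x : Fin (2 * s)) : flipE x = flipFun x := rfl

lemma flip_em (t : Fin s) : flipE (em t) = om t := by
  apply Fin.ext
  rw [flipE_apply, flipFun_val, om_val, em_val, if_pos (by omega)]

lemma flip_om (t : Fin s) : flipE (om t) = em t := by
  apply Fin.ext
  rw [flipE_apply, flipFun_val, om_val, em_val, if_neg (by omega)]
  omega

def partner (σ : Equiv.Perm (Fin (2 * s))) : Equiv.Perm (Fin (2 * s)) :=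
  σ * flipE * σ⁻¹

lemma partner_apply (σ : Equiv.Perm (Fin (2 * s))) (x : Fin (2 * s)) :
    partner σ x = σ (flipE (σ⁻¹ x)) := rfl

lemma partner_em (σ : Equiv.Perm (Fin (2 * s))) (t : Fin s) :
    partner σ (σ (em t)) = σ (om t) := by
  rw [partner_apply, show σ⁻¹ (σ (em t)) = em t from σ.symm_apply_apply _, flip_em]

lemma partner_om (σ : Equiv.Perm (Fin (2 * s))) (t : Fin s) :
    partner σ (σ (om t)) = σ (em t) := by
  rw [partner_apply, show σ⁻¹ (σ (om t)) = om t from σ.symm_apply_apply _, flip_om]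

lemma partner_partner (σ : Equiv.Perm (Fin (2 * s))) (x : Fin (2 * s)) :
    partner σ (partner σ x) = x := by
  rw [partner_apply, partner_apply,
    show σ⁻¹ (σ (flipE (σ⁻¹ x))) = flipE (σ⁻¹ x) from σ.symm_apply_apply _]
  rw [show flipE (flipE (σ⁻¹ x)) = σ⁻¹ x from flipFun_involutive _]
  exact σ.apply_symm_apply x

lemma exists_pair (σ : Equiv.Perm (Fin (2 * s))) (x : Fin (2 * s)) :
    (∃ t, x = σ (em t) ∧ partner σ x = σ (om t)) ∨
    (∃ t, x = σ (om t) ∧ partner σ x = σ (em t)) := by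
  rcases em_or_om (σ⁻¹ x) with h | h
  · left
    set t := hl (σ⁻¹ x) with ht
    have hx : x = σ (em t) := by
      conv_lhs => rw [← show σ (σ⁻¹ x) = x from σ.apply_symm_apply x]
      rw [← h]
    exact ⟨t, hx, by rw [hx, partner_em]⟩
  · right
    set t := hl (σ⁻¹ x) with ht
    have hx : x = σ (om t) := by
      conv_lhs => rw [← show σ (σ⁻¹ x) = x from σ.apply_symm_apply x]
      rw [← h]
    exact ⟨t, hx, by rw [hx, partner_om]⟩


/-! ### Parity condition and the forward map -/

def Opp (σ : Equiv.Perm (Fin (2 * s))) : Prop :=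
  ∀ t : Fin s, (σ (em t)).1 % 2 ≠ (σ (om t)).1 % 2

lemma Opp.partner_parity {σ : Equiv.Perm (Fin (2 * s))} (h : Opp σ) (x : Fin (2 * s)) :
    (partner σ x).1 % 2 ≠ x.1 % 2 := by
  rcases exists_pair σ x with ⟨t, hx, hp⟩ | ⟨t, hx, hp⟩
  · subst hx; rw [hp]; exact (h t).symm
  · subst hx; rw [hp]; exact h t

noncomputable def aFun (σ : Equiv.Perm (Fin (2 * s))) (t : Fin s) : Fin s :=
  if (σ (em t)).1 % 2 = 0 then hl (σ (em t)) else hl (σ (om t))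

noncomputable def bFun (σ : Equiv.Perm (Fin (2 * s))) (t : Fin s) : Fin s :=
  if (σ (em t)).1 % 2 = 0 then hl (σ (om t)) else hl (σ (em t))

noncomputable def piFun (σ : Equiv.Perm (Fin (2 * s))) (u : Fin s) : Fin s :=
  hl (partner σ (em u))

lemma spec_even {σ : Equiv.Perm (Fin (2 * s))} (h : Opp σ) {t : Fin s}
    (hp : (σ (em t)).1 % 2 = 0) :
    em (aFun σ t) = σ (em t) ∧ om (bFun σ t) = σ (om t) := by
  have h2 : (σ (om t)).1 % 2 = 1 := by have := h t; omega
  rw [aFun, if_pos hp, bFun, if_pos hp]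
  exact ⟨em_hl hp, om_hl h2⟩

lemma spec_odd {σ : Equiv.Perm (Fin (2 * s))} (h : Opp σ) {t : Fin s}
    (hp : ¬ (σ (em t)).1 % 2 = 0) :
    om (bFun σ t) = σ (em t) ∧ em (aFun σ t) = σ (om t) := by
  have h1 : (σ (em t)).1 % 2 = 1 := by omega
  have h2 : (σ (om t)).1 % 2 = 0 := by have := h t; omega
  rw [aFun, if_neg hp, bFun, if_neg hp]
  exact ⟨om_hl h1, em_hl h2⟩

/-- The even element of pair `t` is `em (aFun σ t)`, and its partner is `om (bFun σ t)`. -/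
lemma partner_em_aFun {σ : Equiv.Perm (Fin (2 * s))} (h : Opp σ) (t : Fin s) :
    partner σ (em (aFun σ t)) = om (bFun σ t) := by
  by_cases hp : (σ (em t)).1 % 2 = 0
  · obtain ⟨h1, h2⟩ := spec_even h hp
    rw [h1, partner_em, ← h2]
  · obtain ⟨h1, h2⟩ := spec_odd h hp
    rw [h2, partner_om, ← h1]

lemma om_piFun {σ : Equiv.Perm (Fin (2 * s))} (h : Opp σ) (u : Fin s) :
    om (piFun σ u) = partner σ (em u) := by
  have := h.partner_parity (em u)
  rw [em_val] at this
  exact om_hl (by omega)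

lemma piFun_aFun {σ : Equiv.Perm (Fin (2 * s))} (h : Opp σ) (t : Fin s) :
    piFun σ (aFun σ t) = bFun σ t := by
  have := partner_em_aFun h t
  rw [piFun, this, hl_om]

lemma piFun_injective {σ : Equiv.Perm (Fin (2 * s))} (h : Opp σ) :
    Function.Injective (piFun σ) := by
  intro u v huv
  have h1 : om (piFun σ u) = om (piFun σ v) := congrArg om huv
  rw [om_piFun h, om_piFun h] at h1
  exact em_injective ((partner σ).injective h1)

lemma aFun_injective {σ : Equiv.Perm (Fin (2 * s))} (h : Opp σ) :
    Function.Injective (aFun σ) := by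
  have key : ∀ t : Fin s, ∃ x : Fin (2 * s), hl x = t ∧ em (aFun σ t) = σ x := by
    intro t
    by_cases hp : (σ (em t)).1 % 2 = 0
    · exact ⟨em t, hl_em t, (spec_even h hp).1⟩
    · exact ⟨om t, hl_om t, (spec_odd h hp).2⟩
  intro t t' htt
  obtain ⟨x, hx, hx2⟩ := key t
  obtain ⟨y, hy, hy2⟩ := key t'
  have : σ x = σ y := by rw [← hx2, ← hy2, htt]
  rw [← hx, ← hy, σ.injective this]

lemma bFun_injective {σ : Equiv.Perm (Fin (2 * s))} (h : Opp σ) :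
    Function.Injective (bFun σ) := by
  intro t t' htt
  have := piFun_aFun h t
  have h2 := piFun_aFun h t'
  exact aFun_injective h (piFun_injective h (by rw [this, h2, htt]))

noncomputable def piPerm (σ : Equiv.Perm (Fin (2 * s))) : Equiv.Perm (Fin s) :=
  if hb : Function.Bijective (piFun σ) then Equiv.ofBijective _ hb else 1

noncomputable def aPerm (σ : Equiv.Perm (Fin (2 * s))) : Equiv.Perm (Fin s) :=
  if hb : Function.Bijective (aFun σ) then Equiv.ofBijective _ hb else 1

noncomputable def bPerm (σ : Equiv.Perm (Fin (2 * s))) : Equiv.Perm (Fin s) :=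
  if hb : Function.Bijective (bFun σ) then Equiv.ofBijective _ hb else 1

lemma piPerm_apply {σ : Equiv.Perm (Fin (2 * s))} (h : Opp σ) (u : Fin s) :
    piPerm σ u = piFun σ u := by
  rw [piPerm, dif_pos (Finite.injective_iff_bijective.mp (piFun_injective h))]
  rfl

lemma aPerm_apply {σ : Equiv.Perm (Fin (2 * s))} (h : Opp σ) (t : Fin s) :
    aPerm σ t = aFun σ t := by
  rw [aPerm, dif_pos (Finite.injective_iff_bijective.mp (aFun_injective h))]
  rfl

lemma bPerm_apply {σ : Equiv.Perm (Fin (2 * s))} (h : Opp σ) (t : Fin s) :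
    bPerm σ t = bFun σ t := by
  rw [bPerm, dif_pos (Finite.injective_iff_bijective.mp (bFun_injective h))]
  rfl


/-! ### The backward map: canonical pairing from a permutation -/

noncomputable def mFun (π : Equiv.Perm (Fin s)) (u : Fin s) : Fin (2 * s) :=
  if u.1 ≤ (π u).1 then em u else om (π u)

noncomputable def MFun (π : Equiv.Perm (Fin s)) (u : Fin s) : Fin (2 * s) :=
  if u.1 ≤ (π u).1 then om (π u) else em u

lemma mFun_lt_MFun (π : Equiv.Perm (Fin s)) (u : Fin s) : mFun π u < MFun π u := by
  rw [mFun, MFun, Fin.lt_iff_val_lt_val]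
  split_ifs <;> simp <;> omega

lemma mFun_injective (π : Equiv.Perm (Fin s)) : Function.Injective (mFun π) := by
  intro u v h
  have hv := congrArg Fin.val h
  rw [mFun, mFun] at hv
  split_ifs at hv with h1 h2 h2 <;> simp only [em_val, om_val] at hv
  · exact Fin.ext (by omega)
  · omega
  · omega
  · exact π.injective (Fin.ext (by omega))

lemma MFun_injective (π : Equiv.Perm (Fin s)) : Function.Injective (MFun π) := by
  intro u v h
  have hv := congrArg Fin.val h
  rw [MFun, MFun] at hv
  split_ifs at hv with h1 h2 h2 <;> simp only [em_val, om_val] at hv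
  · exact π.injective (Fin.ext (by omega))
  · omega
  · omega
  · exact Fin.ext (by omega)

lemma mFun_ne_MFun (π : Equiv.Perm (Fin s)) (u v : Fin s) : mFun π u ≠ MFun π v := by
  intro h
  have hv := congrArg Fin.val h
  rw [mFun, MFun] at hv
  split_ifs at hv with h1 h2 h2 <;> simp only [em_val, om_val] at hv
  · omega
  · have : u = v := Fin.ext (by omega)
    subst this; omega
  · have : π u = π v := Fin.ext (by omega)
    have : u = v := π.injective this
    subst this; omega
  · omega

noncomputable def gPerm (π : Equiv.Perm (Fin s)) : Equiv.Perm (Fin s) :=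
  Tuple.sort (mFun π)

lemma mFun_gPerm_strictMono (π : Equiv.Perm (Fin s)) :
    StrictMono (fun t => mFun π (gPerm π t)) := by
  have hmono : Monotone (mFun π ∘ gPerm π) := Tuple.monotone_sort (mFun π)
  exact hmono.strictMono_of_injective ((mFun_injective π).comp (gPerm π).injective)

noncomputable def sigFun (π : Equiv.Perm (Fin s)) (x : Fin (2 * s)) : Fin (2 * s) :=
  if x.1 % 2 = 0 then mFun π (gPerm π (hl x)) else MFun π (gPerm π (hl x))

lemma sigFun_em (π : Equiv.Perm (Fin s)) (t : Fin s) :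
    sigFun π (em t) = mFun π (gPerm π t) := by
  rw [sigFun, if_pos (by simp only [em_val]; omega), hl_em]

lemma sigFun_om (π : Equiv.Perm (Fin s)) (t : Fin s) :
    sigFun π (om t) = MFun π (gPerm π t) := by
  rw [sigFun, if_neg (by simp only [om_val]; omega), hl_om]

lemma sigFun_injective (π : Equiv.Perm (Fin s)) : Function.Injective (sigFun π) := by
  intro x y h
  rw [sigFun, sigFun] at h
  have hhl : hl x = hl y → x.1 % 2 = y.1 % 2 → x = y := by
    intro h1 h2
    have := congrArg Fin.val h1
    simp only [hl_val] at this
    exact Fin.ext (by omega)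
  split_ifs at h with h1 h2 h2
  · exact hhl ((gPerm π).injective (mFun_injective π h)) (by omega)
  · exact absurd h (mFun_ne_MFun π _ _)
  · exact absurd h.symm (mFun_ne_MFun π _ _)
  · exact hhl ((gPerm π).injective (MFun_injective π h)) (by omega)

noncomputable def sigPerm (π : Equiv.Perm (Fin s)) : Equiv.Perm (Fin (2 * s)) :=
  Equiv.ofBijective (sigFun π) (Finite.injective_iff_bijective.mp (sigFun_injective π))

lemma sigPerm_apply (π : Equiv.Perm (Fin s)) (x : Fin (2 * s)) :
    sigPerm π x = sigFun π x := rfl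

lemma mem_pairings {σ : Equiv.Perm (Fin (2 * s))} :
    σ ∈ pairings s ↔
      (∀ t : Fin s, σ (em t) < σ (om t)) ∧
        ∀ t u : Fin s, t < u → σ (em t) < σ (em u) := by
  simp only [pairings, Finset.mem_filter, Finset.mem_univ, true_and]
  exact Iff.rfl

lemma sigPerm_mem (π : Equiv.Perm (Fin s)) : sigPerm π ∈ pairings s := by
  rw [mem_pairings]
  constructor
  · intro t
    rw [sigPerm_apply, sigPerm_apply, sigFun_em, sigFun_om]
    exact mFun_lt_MFun π _
  · intro t u htu
    rw [sigPerm_apply, sigPerm_apply, sigFun_em, sigFun_em]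
    exact mFun_gPerm_strictMono π htu

lemma opp_sigPerm (π : Equiv.Perm (Fin s)) : Opp (sigPerm π) := by
  intro t
  rw [sigPerm_apply, sigPerm_apply, sigFun_em, sigFun_om, mFun, MFun]
  split_ifs <;> simp <;> omega

lemma partner_sigPerm (π : Equiv.Perm (Fin s)) (u : Fin s) :
    partner (sigPerm π) (em u) = om (π u) := by
  set t := (gPerm π)⁻¹ u with ht
  have hgt : gPerm π t = u := by rw [ht]; simp
  by_cases hb : u.1 ≤ (π u).1
  · have h1 : sigPerm π (em t) = em u := by
      rw [sigPerm_apply, sigFun_em, hgt, mFun, if_pos hb]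
    have h2 : sigPerm π (om t) = om (π u) := by
      rw [sigPerm_apply, sigFun_om, hgt, MFun, if_pos hb]
    rw [← h1, partner_em, h2]
  · have h1 : sigPerm π (om t) = em u := by
      rw [sigPerm_apply, sigFun_om, hgt, MFun, if_neg hb]
    have h2 : sigPerm π (em t) = om (π u) := by
      rw [sigPerm_apply, sigFun_em, hgt, mFun, if_neg hb]
    rw [← h1, partner_om, h2]

lemma piPerm_sigPerm (π : Equiv.Perm (Fin s)) : piPerm (sigPerm π) = π := by
  apply Equiv.ext
  intro u
  rw [piPerm_apply (opp_sigPerm π), piFun, partner_sigPerm, hl_om]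


/-! ### Uniqueness of the canonical form -/

lemma min_prop {σ : Equiv.Perm (Fin (2 * s))} (hσ : σ ∈ pairings s) (t : Fin s)
    (x : Fin (2 * s)) (hx : 2 * t.1 ≤ x.1) : σ (em t) ≤ σ x := by
  rw [mem_pairings] at hσ
  set r := hl x with hr
  have htr : t.1 ≤ r.1 := by rw [hr]; simp only [hl_val]; omega
  have h1 : σ (em t) ≤ σ (em r) := by
    rcases lt_or_eq_of_le htr with h | h
    · exact le_of_lt (hσ.2 t r (by rwa [Fin.lt_iff_val_lt_val]))
    · rw [show t = r from Fin.ext h]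
  rcases em_or_om x with h | h
  · rw [h]; exact h1
  · rw [h]; exact le_of_lt (lt_of_le_of_lt h1 (hσ.1 r))

lemma pairings_ext {σ₁ σ₂ : Equiv.Perm (Fin (2 * s))} (h1 : σ₁ ∈ pairings s)
    (h2 : σ₂ ∈ pairings s) (hp : ∀ x, partner σ₁ x = partner σ₂ x) : σ₁ = σ₂ := by
  have key : ∀ n : ℕ, ∀ t : Fin s, t.1 = n →
      σ₁ (em t) = σ₂ (em t) ∧ σ₁ (om t) = σ₂ (om t) := by
    intro n
    induction n using Nat.strong_induction_on with
    | _ n IH =>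
      intro t htn
      have hem : σ₁ (em t) = σ₂ (em t) := by
        have le12 : ∀ (τ₁ τ₂ : Equiv.Perm (Fin (2 * s))), τ₁ ∈ pairings s → τ₂ ∈ pairings s →
            (∀ m < n, ∀ r : Fin s, r.1 = m →
              τ₁ (em r) = τ₂ (em r) ∧ τ₁ (om r) = τ₂ (om r)) →
            τ₁ (em t) ≤ τ₂ (em t) := by
          intro τ₁ τ₂ hτ1 hτ2 hIH
          set x := τ₁⁻¹ (τ₂ (em t)) with hxdef
          have hx : τ₁ x = τ₂ (em t) := by rw [hxdef]; simp
          by_cases hlt : x.1 < 2 * n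
          · exfalso
            set r := hl x with hr
            have hrn : r.1 < n := by rw [hr]; simp only [hl_val]; omega
            have hspec := hIH r.1 hrn r rfl
            have : τ₂ x = τ₂ (em t) := by
              rcases em_or_om x with h | h
              · rw [h] at hx ⊢
                rw [← hspec.1]; exact hx
              · rw [h] at hx ⊢
                rw [← hspec.2]; exact hx
            have hxet : x = em t := τ₂.injective this
            have := congrArg Fin.val hxet
            simp only [em_val] at this
            omega
          · have : 2 * t.1 ≤ x.1 := by omega
            calc τ₁ (em t) ≤ τ₁ x := min_prop hτ1 t x this
              _ = τ₂ (em t) := hx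
        have hIH' : ∀ m < n, ∀ r : Fin s, r.1 = m →
            σ₁ (em r) = σ₂ (em r) ∧ σ₁ (om r) = σ₂ (om r) := by
          intro m hm r hrm
          exact IH m hm r hrm
        have hIH'' : ∀ m < n, ∀ r : Fin s, r.1 = m →
            σ₂ (em r) = σ₁ (em r) ∧ σ₂ (om r) = σ₁ (om r) := by
          intro m hm r hrm
          exact ⟨(hIH' m hm r hrm).1.symm, (hIH' m hm r hrm).2.symm⟩
        subst htn
        exact le_antisymm (le12 σ₁ σ₂ h1 h2 hIH') (le12 σ₂ σ₁ h2 h1 hIH'')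
      refine ⟨hem, ?_⟩
      have e1 : σ₁ (om t) = partner σ₁ (σ₁ (em t)) := (partner_em σ₁ t).symm
      rw [e1, hp, hem, partner_em]
  apply Equiv.ext
  intro x
  rcases em_or_om x with h | h <;> rw [h]
  · exact (key (hl x).1 (hl x) rfl).1
  · exact (key (hl x).1 (hl x) rfl).2

lemma sigPerm_piPerm {σ : Equiv.Perm (Fin (2 * s))} (hσ : σ ∈ pairings s) (h : Opp σ) :
    sigPerm (piPerm σ) = σ := by
  apply pairings_ext (sigPerm_mem _) hσ
  have heven : ∀ u : Fin s, partner (sigPerm (piPerm σ)) (em u) = partner σ (em u) := by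
    intro u
    rw [partner_sigPerm, piPerm_apply h, om_piFun h]
  intro x
  rcases em_or_om x with hx | hx
  · rw [hx]; exact heven (hl x)
  · rw [hx]
    set v := hl x
    set y := partner σ (om v) with hy
    have hyp : y.1 % 2 = 0 := by
      have := h.partner_parity (om v)
      rw [om_val] at this
      omega
    have hyw : em (hl y) = y := em_hl hyp
    have h2 : partner σ (em (hl y)) = om v := by
      rw [hyw, hy, partner_partner]
    have h3 : partner (sigPerm (piPerm σ)) (em (hl y)) = om v := by
      rw [heven, h2]
    calc partner (sigPerm (piPerm σ)) (om v)
        = partner (sigPerm (piPerm σ)) (partner (sigPerm (piPerm σ)) (em (hl y))) := by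
          rw [h3]
      _ = em (hl y) := partner_partner _ _
      _ = y := hyw
      _ = partner σ (om v) := hy.symm


/-! ### Sign computation -/

def Dp : Fin s × Fin 2 ≃ Fin (2 * s) where
  toFun p := ⟨2 * p.1.1 + p.2.1, by have := p.1.2; have := p.2.2; omega⟩
  invFun x := (hl x, ⟨x.1 % 2, by omega⟩)
  left_inv := by
    rintro ⟨⟨t, ht⟩, ⟨i, hi⟩⟩
    simp only [hl]
    rw [Prod.mk.injEq]
    constructor <;> apply Fin.ext <;> simp <;> omega
  right_inv := by
    rintro ⟨x, hx⟩
    apply Fin.ext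
    simp only [hl]
    omega

lemma Dp_zero (t : Fin s) : Dp (t, 0) = em t := by
  apply Fin.ext; simp [Dp, em]

lemma Dp_one (t : Fin s) : Dp (t, 1) = om t := by
  apply Fin.ext; simp [Dp, om]

noncomputable def cFun (σ : Equiv.Perm (Fin (2 * s))) (j : Fin 2) : Equiv.Perm (Fin s) :=
  if j = 0 then aPerm σ else bPerm σ

noncomputable def dFun (σ : Equiv.Perm (Fin (2 * s))) (t : Fin s) : Equiv.Perm (Fin 2) :=
  if (σ (em t)).1 % 2 = 0 then 1 else Equiv.swap 0 1

lemma sigma_decomp {σ : Equiv.Perm (Fin (2 * s))} (h : Opp σ) :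
    σ = (Dp.permCongr (Equiv.prodCongrLeft (cFun σ))) *
      (Dp.permCongr (Equiv.prodCongrRight (dFun σ))) := by
  apply Equiv.ext
  intro x
  obtain ⟨⟨t, i⟩, rfl⟩ := Dp.surjective x
  simp only [Equiv.Perm.mul_apply, Equiv.permCongr_apply, Equiv.symm_apply_apply,
    Equiv.prodCongrRight_apply, Equiv.prodCongrLeft_apply]
  by_cases hp : (σ (em t)).1 % 2 = 0
  · have hd : dFun σ t = 1 := if_pos hp
    rw [hd]
    have hi : i = 0 ∨ i = 1 := by omega
    rcases hi with rfl | rfl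
    · rw [show ((1 : Equiv.Perm (Fin 2)) 0) = 0 from rfl, Dp_zero, Dp_zero, cFun, if_pos rfl,
        aPerm_apply h, (spec_even h hp).1]
    · rw [show ((1 : Equiv.Perm (Fin 2)) 1) = 1 from rfl, Dp_one, Dp_one, cFun,
        if_neg (by decide), bPerm_apply h, (spec_even h hp).2]
  · have hd : dFun σ t = Equiv.swap 0 1 := if_neg hp
    rw [hd]
    have hi : i = 0 ∨ i = 1 := by omega
    rcases hi with rfl | rfl
    · rw [show (Equiv.swap (0 : Fin 2) 1) 0 = 1 from by decide, Dp_zero, Dp_one, cFun,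
        if_neg (by decide), bPerm_apply h, (spec_odd h hp).1]
    · rw [show (Equiv.swap (0 : Fin 2) 1) 1 = 0 from by decide, Dp_one, Dp_zero, cFun,
        if_pos rfl, aPerm_apply h, (spec_odd h hp).2]

lemma sign_sigma {σ : Equiv.Perm (Fin (2 * s))} (h : Opp σ) :
    Equiv.Perm.sign σ = Equiv.Perm.sign (aPerm σ) * Equiv.Perm.sign (bPerm σ) *
      ∏ t : Fin s, (if (σ (em t)).1 % 2 = 0 then 1 else (-1 : ℤˣ)) := by
  conv_lhs => rw [sigma_decomp h]
  rw [_root_.map_mul, Equiv.Perm.sign_permCongr, Equiv.Perm.sign_permCongr,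
    Equiv.Perm.sign_prodCongrLeft, Equiv.Perm.sign_prodCongrRight]
  congr 1
  · rw [Fin.prod_univ_two]
    rw [cFun, if_pos rfl, cFun, if_neg (by decide)]
  · apply Finset.prod_congr rfl
    intro t _
    rw [dFun]
    split_ifs
    · exact Equiv.Perm.sign_one
    · exact Equiv.Perm.sign_swap (by decide)

lemma piPerm_eq {σ : Equiv.Perm (Fin (2 * s))} (h : Opp σ) :
    piPerm σ * aPerm σ = bPerm σ := by
  apply Equiv.ext
  intro t
  rw [Equiv.Perm.mul_apply, aPerm_apply h, piPerm_apply h, bPerm_apply h, piFun_aFun h]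

lemma sign_piPerm {σ : Equiv.Perm (Fin (2 * s))} (h : Opp σ) :
    Equiv.Perm.sign (piPerm σ) =
      Equiv.Perm.sign (aPerm σ) * Equiv.Perm.sign (bPerm σ) := by
  have := congrArg Equiv.Perm.sign (piPerm_eq h)
  rw [_root_.map_mul] at this
  have h2 : Equiv.Perm.sign (aPerm σ) * Equiv.Perm.sign (aPerm σ) = 1 :=
    Int.units_mul_self _
  calc Equiv.Perm.sign (piPerm σ)
      = Equiv.Perm.sign (piPerm σ) * (Equiv.Perm.sign (aPerm σ) * Equiv.Perm.sign (aPerm σ)) := by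
        rw [h2, mul_one]
    _ = (Equiv.Perm.sign (piPerm σ) * Equiv.Perm.sign (aPerm σ)) * Equiv.Perm.sign (aPerm σ) :=
        (mul_assoc _ _ _).symm
    _ = Equiv.Perm.sign (bPerm σ) * Equiv.Perm.sign (aPerm σ) := by rw [this]
    _ = _ := mul_comm _ _


end Stmt16

open Stmt16 in
/-- if an antisymmetric `2s × 2s` matrix vanishes on pairs of indices of the same
parity, its Pfaffian is the determinant of the `s × s` matrix of its odd-row/even-column
entries (1-indexed), i.e. `B t u = A (2t) (2u+1)` with 0-indexing. -/
theorem stmt16 {R : Type*} [CommRing R] (s : ℕ) (A : Matrix (Fin (2 * s)) (Fin (2 * s)) R)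
    (hA : Aᵀ = -A) (h0 : ∀ i j : Fin (2 * s), i.1 % 2 = j.1 % 2 → A i j = 0) :
    pf s A = Matrix.det (Matrix.of fun t u : Fin s =>
      A ⟨2 * t.1, by have := t.2; omega⟩ ⟨2 * u.1 + 1, by have := u.2; omega⟩) := by
  classical
  set B : Matrix (Fin s) (Fin s) R := Matrix.of (fun t u : Fin s => A (em t) (om u)) with hBdef
  show pf s A = B.det
  set φ : ℤˣ →* R := (Int.castRingHom R).toMonoidHom.comp (Units.coeHom ℤ) with hφdef
  have hφ : ∀ u : ℤˣ, ((u : ℤ) : R) = φ u := fun u => rfl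
  have hpf : pf s A = ∑ σ ∈ (pairings s).filter Opp,
      (((Equiv.Perm.sign σ : ℤˣ) : ℤ) : R) * ∏ t : Fin s, A (σ (em t)) (σ (om t)) := by
    rw [show pf s A = ∑ σ ∈ pairings s, (((Equiv.Perm.sign σ : ℤˣ) : ℤ) : R) *
        ∏ t : Fin s, A (σ (em t)) (σ (om t)) from rfl]
    refine (Finset.sum_filter_of_ne ?_).symm
    intro σ hσ hne
    by_contra hOpp
    apply hne
    rw [Opp] at hOpp
    push_neg at hOpp
    obtain ⟨t, ht⟩ := hOpp
    have hz : A (σ (em t)) (σ (om t)) = 0 := h0 _ _ ht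
    rw [Finset.prod_eq_zero (Finset.mem_univ t) hz, mul_zero]
  have hdet : B.det = ∑ π : Equiv.Perm (Fin s),
      (((Equiv.Perm.sign π : ℤˣ) : ℤ) : R) * ∏ u : Fin s, B u (π u) := by
    rw [← Matrix.det_transpose, Matrix.det_apply']
    apply Finset.sum_congr rfl
    intro π _
    congr 1
  rw [hpf, hdet]
  refine Finset.sum_nbij' (fun σ => piPerm σ) (fun π => sigPerm π)
    (fun _ _ => Finset.mem_univ _) ?_ ?_ ?_ ?_
  · intro π _
    exact Finset.mem_filter.mpr ⟨sigPerm_mem π, opp_sigPerm π⟩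
  · intro σ hσ
    obtain ⟨hmem, hOpp⟩ := Finset.mem_filter.mp hσ
    exact sigPerm_piPerm hmem hOpp
  · intro π _
    exact piPerm_sigPerm π
  · intro σ hσ
    obtain ⟨hmem, hOpp⟩ := Finset.mem_filter.mp hσ
    have hanti : ∀ x y, A x y = - A y x := by
      intro x y
      have := congrFun (congrFun hA x) y
      rw [Matrix.transpose_apply, Matrix.neg_apply] at this
      rw [this, neg_neg]
    have hAfac : ∀ t : Fin s, A (σ (em t)) (σ (om t)) =
        (if (σ (em t)).1 % 2 = 0 then (1 : R) else -1) * B (aFun σ t) (bFun σ t) := by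
      intro t
      by_cases hp : (σ (em t)).1 % 2 = 0
      · rw [if_pos hp, one_mul]
        obtain ⟨h1, h2⟩ := spec_even hOpp hp
        rw [← h1, ← h2]
        rfl
      · rw [if_neg hp]
        obtain ⟨h1, h2⟩ := spec_odd hOpp hp
        rw [← h1, ← h2, hanti]
        rw [show (-1 : R) * B (aFun σ t) (bFun σ t) = -(B (aFun σ t) (bFun σ t)) from
          neg_one_mul _]
        congr 1
    have hprod : ∏ t : Fin s, A (σ (em t)) (σ (om t)) =
        (∏ t : Fin s, (if (σ (em t)).1 % 2 = 0 then (1 : R) else -1)) *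
          ∏ t : Fin s, B (aFun σ t) (bFun σ t) := by
      rw [← Finset.prod_mul_distrib]
      exact Finset.prod_congr rfl fun t _ => hAfac t
    have hreindex : ∏ t : Fin s, B (aFun σ t) (bFun σ t) =
        ∏ u : Fin s, B u (piPerm σ u) := by
      rw [← Equiv.prod_comp (aPerm σ) (fun u => B u (piPerm σ u))]
      apply Finset.prod_congr rfl
      intro t _
      rw [aPerm_apply hOpp, piPerm_apply hOpp, piFun_aFun hOpp]
    have hcast : ((((∏ t : Fin s,
          (if (σ (em t)).1 % 2 = 0 then 1 else (-1 : ℤˣ))) : ℤˣ) : ℤ) : R)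
        = ∏ t : Fin s, (if (σ (em t)).1 % 2 = 0 then (1 : R) else -1) := by
      rw [hφ, map_prod]
      apply Finset.prod_congr rfl
      intro t _
      rw [apply_ite φ, _root_.map_one]
      congr 1
      simp [hφdef]
    rw [hprod, hreindex, ← hcast, sign_sigma hOpp, sign_piPerm hOpp]
    rw [hφ, hφ, hφ, ← mul_assoc, ← _root_.map_mul]
    congr 2
    rw [mul_assoc, Int.units_mul_self, mul_one]
end
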